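/- arXiv:2006.07769 — 4 statements merged into one kernel-verified Lean document; each statement's English description precedes it below -/
import Mathlib

section
/- Let f : ℝ^m → ℝ satisfy the standing assumptions and let the variance-reduced SGD iterates be generated by x_{k+1} = x_k − α(∇f(x_k) + w_{k,N_k}) with constant steplength α ∈ (0, 2/(η+L)]. Then for every k ≥ 0, E[‖x_{k+1} − x*‖²] ≤ (1 − 2αηL/(η+L)) · E[‖x_k − x*‖²] + α²ν²/N_k. -/
open MeasureTheory Filter Real
open scoped Topology RealInnerProductSpace

section Aux

variable {E : Type*} [NormedAddCommGroup E] [InnerProductSpace ℝ E] [CompleteSpace E]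

lemma ftc_seg (h : E → ℝ) (G : E → E) (hG : ∀ y, HasGradientAt h (G y) y)
    (hGc : Continuous G) (a d : E) :
    h (a + d) - h a = ∫ t in (0:ℝ)..1, ⟪G (a + t • d), d⟫ := by
  have key : ∀ t : ℝ, HasDerivAt (fun s : ℝ => h (a + s • d)) ⟪G (a + t • d), d⟫ t := by
    intro t
    have h1 : HasDerivAt (fun s : ℝ => a + s • d) d t := by
      simpa using ((hasDerivAt_id t).smul_const d).const_add a
    have h2 : HasFDerivAt h (InnerProductSpace.toDual ℝ E (G (a + t • d))) (a + t • d) :=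
      (hG (a + t • d))
    have := h2.comp_hasDerivAt t h1
    simpa [InnerProductSpace.toDual_apply_apply, Function.comp_def] using this
  have hcont : Continuous fun t : ℝ => ⟪G (a + t • d), d⟫ := by
    exact (hGc.comp (by continuity)).inner continuous_const
  rw [intervalIntegral.integral_eq_sub_of_hasDerivAt (fun t _ => key t)
    (hcont.intervalIntegrable _ _)]
  simp

lemma lower_seg (h : E → ℝ) (G : E → E) (hG : ∀ y, HasGradientAt h (G y) y)
    (hGc : Continuous G)
    (hmono : ∀ u v : E, 0 ≤ ⟪G u - G v, u - v⟫) (a d : E) :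
    h a + ⟪G a, d⟫ ≤ h (a + d) := by
  have hcont : Continuous fun t : ℝ => ⟪G (a + t • d), d⟫ :=
    (hGc.comp (by continuity)).inner continuous_const
  have hptwise : ∀ t ∈ Set.Icc (0:ℝ) 1, ⟪G a, d⟫ ≤ ⟪G (a + t • d), d⟫ := by
    intro t ht
    rcases eq_or_lt_of_le ht.1 with rfl | htpos
    · simp
    · have := hmono (a + t • d) a
      have h2 : (0:ℝ) ≤ t * ⟪G (a + t • d) - G a, d⟫ := by
        simpa [inner_smul_right] using this
      have h3 : (0:ℝ) ≤ ⟪G (a + t • d) - G a, d⟫ := nonneg_of_mul_nonneg_right h2 htpos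
      have h4 := h3
      rw [inner_sub_left] at h4
      linarith
  have hint := intervalIntegral.integral_mono_on (μ := MeasureTheory.volume) (a := (0:ℝ)) (b := 1) zero_le_one
    (continuous_const.intervalIntegrable _ _) (hcont.intervalIntegrable _ _) hptwise
  have := ftc_seg h G hG hGc a d
  simp only [intervalIntegral.integral_const, smul_eq_mul, one_mul, sub_zero] at hint
  linarith

lemma upper_seg (h : E → ℝ) (G : E → E) (hG : ∀ y, HasGradientAt h (G y) y)
    (hGc : Continuous G) (M : ℝ)
    (hub : ∀ u v : E, ⟪G u - G v, u - v⟫ ≤ M * ‖u - v‖ ^ 2) (a d : E) :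
    h (a + d) ≤ h a + ⟪G a, d⟫ + M / 2 * ‖d‖ ^ 2 := by
  have hcont : Continuous fun t : ℝ => ⟪G (a + t • d), d⟫ :=
    (hGc.comp (by continuity)).inner continuous_const
  have hptwise : ∀ t ∈ Set.Icc (0:ℝ) 1,
      ⟪G (a + t • d), d⟫ ≤ ⟪G a, d⟫ + t * (M * ‖d‖ ^ 2) := by
    intro t ht
    rcases eq_or_lt_of_le ht.1 with rfl | htpos
    · simp
    · have h1 := hub (a + t • d) a
      have h2 : t * ⟪G (a + t • d) - G a, d⟫ ≤ M * (t^2 * ‖d‖^2) := by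
        simpa [inner_smul_right, norm_smul, abs_of_nonneg ht.1, mul_pow] using h1
      have h3 : ⟪G (a + t • d) - G a, d⟫ ≤ M * (t * ‖d‖^2) := by
        nlinarith
      rw [inner_sub_left] at h3
      linarith
  have hint := intervalIntegral.integral_mono_on (μ := MeasureTheory.volume) (a := (0:ℝ)) (b := 1) zero_le_one
    (hcont.intervalIntegrable _ _)
    ((continuous_const.add (continuous_id'.mul continuous_const)).intervalIntegrable _ _)
    hptwise
  have hval : (∫ t in (0:ℝ)..1, (⟪G a, d⟫ + t * (M * ‖d‖ ^ 2)))
      = ⟪G a, d⟫ + M / 2 * ‖d‖ ^ 2 := by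
    rw [intervalIntegral.integral_add (f := fun _ : ℝ => ⟪G a, d⟫) (g := fun t : ℝ => t * (M * ‖d‖ ^ 2)) (continuous_const.intervalIntegrable (μ := MeasureTheory.volume) _ _)
      ((continuous_id'.mul continuous_const).intervalIntegrable _ _),
      intervalIntegral.integral_mul_const, integral_id]
    simp; ring
  have := ftc_seg h G hG hGc a d
  replace hint := le_of_le_of_eq hint hval
  linarith

lemma lemB (h : E → ℝ) (G : E → E) (hG : ∀ y, HasGradientAt h (G y) y)
    (hGc : Continuous G) (M : ℝ) (hM : 0 < M)
    (hmono : ∀ u v : E, 0 ≤ ⟪G u - G v, u - v⟫)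
    (hub : ∀ u v : E, ⟪G u - G v, u - v⟫ ≤ M * ‖u - v‖ ^ 2) (a b : E) :
    h a + ⟪G a, b - a⟫ + 1 / (2 * M) * ‖G b - G a‖ ^ 2 ≤ h b := by
  set d : E := M⁻¹ • (G a - G b) with hd
  have h1 : h a + ⟪G a, (b + d) - a⟫ ≤ h (b + d) := by
    have := lower_seg h G hG hGc hmono a ((b + d) - a)
    simpa using this
  have h2 : h (b + d) ≤ h b + ⟪G b, d⟫ + M / 2 * ‖d‖ ^ 2 := upper_seg h G hG hGc M hub b d
  have e1 : ⟪G a, (b + d) - a⟫ = ⟪G a, b - a⟫ + ⟪G a, d⟫ := by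
    rw [add_sub_right_comm, inner_add_right]
  have e2 : ⟪G a, d⟫ - ⟪G b, d⟫ = M⁻¹ * ‖G a - G b‖ ^ 2 := by
    rw [← inner_sub_left, hd, inner_smul_right, real_inner_self_eq_norm_sq]
  have e3 : M / 2 * ‖d‖ ^ 2 = 1 / (2 * M) * ‖G a - G b‖ ^ 2 := by
    rw [hd, norm_smul]
    rw [mul_pow]
    have : |M⁻¹| = M⁻¹ := abs_of_pos (by positivity)
    rw [Real.norm_eq_abs, this]
    field_simp
  have e4 : ‖G b - G a‖ = ‖G a - G b‖ := norm_sub_rev _ _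
  rw [e4]
  have hMi : M⁻¹ * ‖G a - G b‖ ^ 2 - 1 / (2*M) * ‖G a - G b‖ ^ 2
      = 1 / (2*M) * ‖G a - G b‖ ^ 2 := by field_simp; ring
  linarith [h1, h2, e1 ▸ h1]

lemma lemC (h : E → ℝ) (G : E → E) (hG : ∀ y, HasGradientAt h (G y) y)
    (hGc : Continuous G) (M : ℝ) (hM : 0 < M)
    (hmono : ∀ u v : E, 0 ≤ ⟪G u - G v, u - v⟫)
    (hub : ∀ u v : E, ⟪G u - G v, u - v⟫ ≤ M * ‖u - v‖ ^ 2) (a b : E) :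
    M⁻¹ * ‖G a - G b‖ ^ 2 ≤ ⟪G a - G b, a - b⟫ := by
  have h1 := lemB h G hG hGc M hM hmono hub a b
  have h2 := lemB h G hG hGc M hM hmono hub b a
  have e1 : ⟪G a, b - a⟫ + ⟪G b, a - b⟫ = -⟪G a - G b, a - b⟫ := by
    rw [inner_sub_left]
    have : (b - a : E) = -(a - b) := by abel
    rw [this, inner_neg_right]
    ring
  have e2 : ‖G a - G b‖ = ‖G b - G a‖ := norm_sub_rev _ _
  have hMi : 1 / (2*M) + 1 / (2*M) = M⁻¹ := by
    rw [← add_div, mul_comm 2 M, ← div_div, div_right_comm]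
    norm_num [one_div]
  have h3 : (1/(2*M))*‖G a - G b‖^2 + (1/(2*M))*‖G b - G a‖^2 = M⁻¹ * ‖G a - G b‖^2 := by
    rw [← e2, ← add_mul, hMi]
  linarith [h1, h2]

lemma gradient_cont {f : E → ℝ} (hf : ContDiff ℝ 1 f) : Continuous (gradient f) := by
  have h1 := hf.continuous_fderiv one_ne_zero
  exact (InnerProductSpace.toDual ℝ E).symm.continuous.comp h1

lemma lemD (f : E → ℝ) (η L : ℝ) (hη : 0 < η) (hηL : η ≤ L) (hf : ContDiff ℝ 1 f)
    (hlip : ∀ a b : E, ‖gradient f a - gradient f b‖ ≤ L * ‖a - b‖)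
    (hsc : ∀ a b : E, η * ‖a - b‖ ^ 2 ≤ ⟪gradient f a - gradient f b, a - b⟫) (a b : E) :
    ‖gradient f a - gradient f b‖ ^ 2 + η * L * ‖a - b‖ ^ 2
      ≤ (η + L) * ⟪gradient f a - gradient f b, a - b⟫ := by
  set g : E := gradient f a - gradient f b with hg
  set d : E := a - b with hd
  rcases eq_or_lt_of_le hηL with rfl | hlt
  · -- η = L case
    have h1 := hsc a b
    have h2 := hlip a b
    have h3 : ‖g‖ ^ 2 ≤ η^2 * ‖d‖ ^ 2 := by
      have := mul_self_le_mul_self (norm_nonneg g) h2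
      calc ‖g‖^2 = ‖g‖ * ‖g‖ := sq ‖g‖
        _ ≤ (η * ‖d‖) * (η * ‖d‖) := this
        _ = η^2 * ‖d‖^2 := by ring
    nlinarith [h1, h3]
  · -- η < L case
    set M : ℝ := L - η with hM
    have hMpos : 0 < M := sub_pos.mpr hlt
    set h : E → ℝ := fun y => f y - (η/2) * ⟪y, y⟫ with hh
    set G : E → E := fun y => gradient f y - η • y with hG
    have hfd : ∀ y : E, HasFDerivAt f ((InnerProductSpace.toDual ℝ E) (gradient f y)) y := by
      intro y
      exact hasGradientAt_iff_hasFDerivAt.mp (hf.differentiable one_ne_zero y).hasGradientAt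
    have hq : ∀ y : E, HasFDerivAt (fun z : E => (η/2) * ⟪z, z⟫)
        (η • ((InnerProductSpace.toDual ℝ E) y)) y := by
      intro y
      have h0 := (hasFDerivAt_id (𝕜 := ℝ) y).inner ℝ (hasFDerivAt_id y)
      have h1 := h0.const_mul (η/2)
      refine h1.congr_fderiv ?_
      ext v
      simp [fderivInnerCLM_apply, InnerProductSpace.toDual_apply_apply, real_inner_comm]
      ring
    have hGh : ∀ y : E, HasGradientAt h (G y) y := by
      intro y
      rw [hasGradientAt_iff_hasFDerivAt]
      have he : (InnerProductSpace.toDual ℝ E) (G y)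
          = (InnerProductSpace.toDual ℝ E) (gradient f y)
            - η • ((InnerProductSpace.toDual ℝ E) y) := by
        simp [hG, map_sub, _root_.map_smul]
      rw [he]
      exact (hfd y).sub (hq y)
    have hGc : Continuous G := (gradient_cont hf).sub (continuous_id.const_smul η)
    have hkey : ∀ u v : E, ⟪G u - G v, u - v⟫ = ⟪gradient f u - gradient f v, u - v⟫
        - η * ‖u - v‖ ^ 2 := by
      intro u v
      have : G u - G v = (gradient f u - gradient f v) - η • (u - v) := by
        simp only [hG, smul_sub]; abel
      rw [this, inner_sub_left, inner_smul_left, real_inner_self_eq_norm_sq]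
      simp
    have hmono : ∀ u v : E, 0 ≤ ⟪G u - G v, u - v⟫ := by
      intro u v
      rw [hkey]
      have := hsc u v
      linarith
    have hub : ∀ u v : E, ⟪G u - G v, u - v⟫ ≤ M * ‖u - v‖ ^ 2 := by
      intro u v
      rw [hkey]
      have h1 := real_inner_le_norm (gradient f u - gradient f v) (u - v)
      have h2 := hlip u v
      have h3 : ⟪gradient f u - gradient f v, u - v⟫ ≤ L * ‖u - v‖ ^ 2 := by
        nlinarith [norm_nonneg (u - v)]
      rw [hM]; linarith
    have hC := lemC h G hGh hGc M hMpos hmono hub a b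
    have e1 : G a - G b = g - η • d := by simp only [hG, hg, hd, smul_sub]; abel
    have e2 : ‖g - η • d‖ ^ 2 = ‖g‖^2 - 2 * η * ⟪g, d⟫ + η^2 * ‖d‖^2 := by
      rw [norm_sub_sq_real, inner_smul_right, norm_smul]
      simp [mul_pow, sq_abs]
      ring
    have e3 : ⟪g - η • d, d⟫ = ⟪g, d⟫ - η * ‖d‖^2 := by
      rw [inner_sub_left, inner_smul_left, real_inner_self_eq_norm_sq]
      simp
    rw [e1, e2, e3, inv_mul_le_iff₀ hMpos] at hC
    nlinarith [hC]

lemma condexp_clm {α F₁ F₂ : Type*}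
    [NormedAddCommGroup F₁] [NormedSpace ℝ F₁] [CompleteSpace F₁]
    [NormedAddCommGroup F₂] [NormedSpace ℝ F₂] [CompleteSpace F₂]
    {m m0 : MeasurableSpace α} {μ : MeasureTheory.Measure α} (hm : m ≤ m0)
    [SigmaFinite (μ.trim hm)] (T : F₁ →L[ℝ] F₂) {f : α → F₁} (hf : Integrable f μ) :
    (fun ω => T ((μ[f|m]) ω)) =ᵐ[μ] μ[fun ω => T (f ω)|m] := by
  refine ae_eq_condExp_of_forall_setIntegral_eq hm (T.integrable_comp hf) ?_ ?_ ?_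
  · intro s _ _
    exact (T.integrable_comp integrable_condExp).integrableOn
  · intro s hs hμs
    rw [T.integral_comp_comm integrable_condExp.integrableOn,
      T.integral_comp_comm hf.integrableOn, setIntegral_condExp hm hf hs]
  · exact (T.continuous.comp_stronglyMeasurable (stronglyMeasurable_condExp (m := m))).aestronglyMeasurable


end Aux

set_option maxHeartbeats 2000000 in
/-- **Lemma 1 (recursion for variance-reduced SGD).**
If `f` is `η`-strongly convex with `L`-Lipschitz gradient, the iterates
`x_{k+1} = x_k − α(∇f(x_k) + w_{k,N_k})` with `α ∈ (0, 2/(η+L)]` satisfy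
`E[‖x_{k+1} − x*‖²] ≤ (1 − 2αηL/(η+L)) E[‖x_k − x*‖²] + α²ν²/N_k`. -/
theorem stmt_0
    {m : ℕ} {Ω : Type*} {m0 : MeasurableSpace Ω} {μ : Measure Ω}
    [IsProbabilityMeasure μ] (ℱ : Filtration ℕ m0)
    (f : EuclideanSpace ℝ (Fin m) → ℝ) (xstar : EuclideanSpace ℝ (Fin m))
    (x w : ℕ → Ω → EuclideanSpace ℝ (Fin m)) (N : ℕ → ℕ)
    (η L ν α : ℝ)
    (hη : 0 < η) (hηL : η ≤ L) (hν : 0 < ν)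
    (hf : ContDiff ℝ 1 f)
    (hlip : ∀ a b, ‖gradient f a - gradient f b‖ ≤ L * ‖a - b‖)
    (hsc : ∀ a b, η * ‖a - b‖ ^ 2 ≤ (inner ℝ (gradient f a - gradient f b) (a - b) : ℝ))
    (hmin : ∀ z, f xstar ≤ f z)
    (hN : ∀ k, 1 ≤ N k)
    (hadapted : ∀ k, StronglyMeasurable[ℱ k] (x k))
    (hwint : ∀ k, Integrable (w k) μ)
    (hwsqint : ∀ k, Integrable (fun ω => ‖w k ω‖ ^ 2) μ)
    (hw0 : ∀ k, μ[w k | ℱ k] =ᵐ[μ] 0)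
    (hwvar : ∀ k, μ[fun ω => ‖w k ω‖ ^ 2 | ℱ k] ≤ᵐ[μ] fun _ => ν ^ 2 / N k)
    (hxint : ∀ k, Integrable (fun ω => ‖x k ω - xstar‖ ^ 2) μ)
    (hα : 0 < α) (hα' : α ≤ 2 / (η + L))
    (hrec : ∀ k ω, x (k + 1) ω = x k ω - α • (gradient f (x k ω) + w k ω)) :
    ∀ k, ∫ ω, ‖x (k + 1) ω - xstar‖ ^ 2 ∂μ ≤
      (1 - 2 * α * η * L / (η + L)) * ∫ ω, ‖x k ω - xstar‖ ^ 2 ∂μ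
        + α ^ 2 * ν ^ 2 / N k := by
  intro k
  have hm : ℱ k ≤ m0 := ℱ.le k
  haveI : SigmaFinite (μ.trim hm) := by infer_instance
  set c : ℝ := 1 - 2 * α * η * L / (η + L) with hc
  set g : Ω → EuclideanSpace ℝ (Fin m) := fun ω => gradient f (x k ω) with hgdef
  set d : Ω → EuclideanSpace ℝ (Fin m) := fun ω => x k ω - xstar with hddef
  set y : Ω → EuclideanSpace ℝ (Fin m) := fun ω => d ω - α • g ω with hydef
  have hP : (0:ℝ) < η + L := by linarith
  -- gradient vanishes at the minimizer
  have hg0 : gradient f xstar = 0 := by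
    have hloc : IsLocalMin f xstar := Filter.Eventually.of_forall fun z => hmin z
    have hfd0 : fderiv ℝ f xstar = 0 := hloc.fderiv_eq_zero
    show (InnerProductSpace.toDual ℝ _).symm (fderiv ℝ f xstar) = 0
    rw [hfd0, map_zero]
  -- pointwise contraction
  have hcontract : ∀ ω, ‖y ω‖ ^ 2 ≤ c * ‖d ω‖ ^ 2 := by
    intro ω
    have hkey := lemD f η L hη hηL hf hlip hsc (x k ω) xstar
    rw [hg0, sub_zero] at hkey
    have hG0 : (0:ℝ) ≤ ‖g ω‖ ^ 2 := sq_nonneg _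
    have hD0 : (0:ℝ) ≤ ‖d ω‖ ^ 2 := sq_nonneg _
    have hα2 : α * (η + L) ≤ 2 := by
      have := (le_div_iff₀ hP).mp hα'
      linarith
    have hexp : ‖y ω‖ ^ 2 = ‖d ω‖ ^ 2 - 2 * α * ⟪g ω, d ω⟫ + α ^ 2 * ‖g ω‖ ^ 2 := by
      rw [hydef]
      simp only
      rw [norm_sub_sq_real, inner_smul_right, norm_smul]
      rw [real_inner_comm (d ω) (g ω)]
      simp [mul_pow, sq_abs]
      ring
    have final : (η + L) * ‖y ω‖ ^ 2 ≤ ((η + L) - 2 * α * η * L) * ‖d ω‖ ^ 2 := by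
      rw [hexp]
      nlinarith [mul_le_mul_of_nonneg_left hkey (by positivity : (0:ℝ) ≤ 2 * α),
        mul_nonneg (mul_nonneg hα.le hG0) (sub_nonneg.mpr hα2)]
    have : c * ‖d ω‖ ^ 2 = (((η + L) - 2 * α * η * L) * ‖d ω‖ ^ 2) / (η + L) := by
      rw [hc]; field_simp
    rw [this, le_div_iff₀ hP]
    linarith [final]
  -- measurability
  have hym0 : StronglyMeasurable[ℱ k] y := by
    apply StronglyMeasurable.sub
    · exact (hadapted k).sub stronglyMeasurable_const
    · exact (((gradient_cont hf).comp_stronglyMeasurable (hadapted k)).const_smul α)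
  have hyae : AEStronglyMeasurable y μ := (hym0.mono hm).aestronglyMeasurable
  have hdae : AEStronglyMeasurable d μ :=
    (((hadapted k).sub stronglyMeasurable_const).mono hm).aestronglyMeasurable
  have hwae : AEStronglyMeasurable (w k) μ := (hwint k).aestronglyMeasurable
  have hgnorm : ∀ ω, ‖g ω‖ ≤ L * ‖d ω‖ := by
    intro ω
    have := hlip (x k ω) xstar
    rw [hg0, sub_zero] at this
    exact this
  have hynorm : ∀ ω, ‖y ω‖ ≤ (1 + α * L) * ‖d ω‖ := by
    intro ω
    calc ‖y ω‖ ≤ ‖d ω‖ + ‖α • g ω‖ := norm_sub_le _ _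
      _ = ‖d ω‖ + α * ‖g ω‖ := by rw [norm_smul, Real.norm_eq_abs, abs_of_pos hα]
      _ ≤ ‖d ω‖ + α * (L * ‖d ω‖) := by
          have := hgnorm ω
          nlinarith [hα.le]
      _ = (1 + α * L) * ‖d ω‖ := by ring
  have hysqae : AEStronglyMeasurable (fun ω => ‖y ω‖ ^ 2) μ := by
    have := hyae.norm
    exact this.mul this |>.congr (ae_of_all _ fun ω => (sq ‖y ω‖).symm)
  have hyint : Integrable (fun ω => ‖y ω‖ ^ 2) μ := by
    refine Integrable.mono' (((hxint k).const_mul ((1 + α * L) ^ 2))) hysqae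
      (ae_of_all _ fun ω => ?_)
    have h1 := hynorm ω
    have h2 : (0:ℝ) ≤ ‖y ω‖ := norm_nonneg _
    rw [Real.norm_eq_abs, abs_of_nonneg (sq_nonneg _)]
    nlinarith [norm_nonneg (d ω)]
  have hwsq := hwsqint k
  have hbd : Integrable (fun ω => (‖y ω‖ ^ 2 + ‖w k ω‖ ^ 2) / 2) μ :=
    (hyint.add hwsq).div_const 2
  have hxwint : Integrable (fun ω => ⟪y ω, w k ω⟫) μ := by
    refine Integrable.mono' hbd
      (hyae.inner hwae) (ae_of_all _ fun ω => ?_)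
    have h1 := abs_real_inner_le_norm (y ω) (w k ω)
    rw [Real.norm_eq_abs]
    have h2 : ‖y ω‖ * ‖w k ω‖ ≤ (‖y ω‖ ^ 2 + ‖w k ω‖ ^ 2) / 2 := by
      nlinarith [sq_nonneg (‖y ω‖ - ‖w k ω‖)]
    calc |⟪y ω, w k ω⟫| ≤ ‖y ω‖ * ‖w k ω‖ := h1
      _ ≤ (‖y ω‖ ^ 2 + ‖w k ω‖ ^ 2) / 2 := h2
  -- expansion
  have hexp : ∀ ω, ‖x (k+1) ω - xstar‖ ^ 2
      = ‖y ω‖ ^ 2 - 2 * α * ⟪y ω, w k ω⟫ + α ^ 2 * ‖w k ω‖ ^ 2 := by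
    intro ω
    have h1 : x (k+1) ω - xstar = y ω - α • w k ω := by
      rw [hrec k ω, hydef, hddef, hgdef]
      simp only [smul_add]
      abel
    rw [h1, norm_sub_sq_real, inner_smul_right, norm_smul]
    simp [mul_pow, sq_abs]
    ring
  -- splitting the integral
  have hsplit : ∫ ω, ‖x (k+1) ω - xstar‖ ^ 2 ∂μ
      = ∫ ω, ‖y ω‖ ^ 2 ∂μ - 2 * α * ∫ ω, ⟪y ω, w k ω⟫ ∂μ
        + α ^ 2 * ∫ ω, ‖w k ω‖ ^ 2 ∂μ := by
    have i2 : Integrable (fun ω => 2 * α * ⟪y ω, w k ω⟫) μ := hxwint.const_mul (2 * α)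
    have i3 : Integrable (fun ω => α ^ 2 * ‖w k ω‖ ^ 2) μ := hwsq.const_mul (α ^ 2)
    have i1 : Integrable (fun ω => ‖y ω‖ ^ 2 - 2 * α * ⟪y ω, w k ω⟫) μ := hyint.sub i2
    rw [show (fun ω => ‖x (k+1) ω - xstar‖ ^ 2)
        = fun ω => ‖y ω‖ ^ 2 - 2 * α * ⟪y ω, w k ω⟫ + α ^ 2 * ‖w k ω‖ ^ 2 from funext hexp]
    rw [integral_add i1 i3, integral_sub hyint i2, integral_const_mul, integral_const_mul]
  -- coordinate bound helper
  have hcoord : ∀ (v : EuclideanSpace ℝ (Fin m)) (i : Fin m), |v i| ≤ ‖v‖ := by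
    intro v i
    rw [EuclideanSpace.norm_eq]
    rw [show |v i| = Real.sqrt (‖v i‖ ^ 2) by
      rw [Real.sqrt_sq_eq_abs, Real.norm_eq_abs, abs_abs]]
    apply Real.sqrt_le_sqrt
    exact Finset.single_le_sum (fun j _ => sq_nonneg ‖v j‖) (Finset.mem_univ i)
  -- cross term vanishes
  have hterm_int : ∀ i : Fin m, Integrable (fun ω => y ω i * w k ω i) μ := by
    intro i
    refine Integrable.mono' hbd ?_ (ae_of_all _ fun ω => ?_)
    · exact ((EuclideanSpace.proj (𝕜 := ℝ) i).continuous.comp_aestronglyMeasurable hyae).mul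
        ((EuclideanSpace.proj (𝕜 := ℝ) i).continuous.comp_aestronglyMeasurable hwae)
    · have h1 := hcoord (y ω) i
      have h2 := hcoord (w k ω) i
      rw [Real.norm_eq_abs, abs_mul]
      have h3 : |y ω i| * |w k ω i| ≤ ‖y ω‖ * ‖w k ω‖ :=
        mul_le_mul h1 h2 (abs_nonneg _) (norm_nonneg _)
      have h4 : ‖y ω‖ * ‖w k ω‖ ≤ (‖y ω‖ ^ 2 + ‖w k ω‖ ^ 2) / 2 := by
        nlinarith [sq_nonneg (‖y ω‖ - ‖w k ω‖)]
      linarith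
  have hcross : ∫ ω, ⟪y ω, w k ω⟫ ∂μ = 0 := by
    have hinner : ∀ ω, ⟪y ω, w k ω⟫ = ∑ i : Fin m, y ω i * w k ω i := by
      intro ω
      rw [PiLp.inner_apply]
      simp [RCLike.inner_apply, conj_trivial, mul_comm]
    rw [integral_congr_ae (ae_of_all _ hinner),
      integral_finset_sum Finset.univ (fun i _ => hterm_int i)]
    refine Finset.sum_eq_zero fun i _ => ?_
    have hyim : StronglyMeasurable[ℱ k] (fun ω => y ω i) :=
      (EuclideanSpace.proj (𝕜 := ℝ) i).continuous.comp_stronglyMeasurable hym0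
    have hwiint : Integrable (fun ω => w k ω i) μ := by
      simpa using (EuclideanSpace.proj (𝕜 := ℝ) i).integrable_comp (hwint k)
    have hcw : μ[fun ω => w k ω i|ℱ k] =ᵐ[μ] fun _ => (0:ℝ) := by
      have h1 := condexp_clm hm (EuclideanSpace.proj (𝕜 := ℝ) i) (hwint k)
      have h2 : (fun ω => (EuclideanSpace.proj (𝕜 := ℝ) i) ((μ[w k|ℱ k]) ω))
          =ᵐ[μ] fun _ => (0:ℝ) := by
        filter_upwards [hw0 k] with ω h
        simp [h]
      exact (h2.symm.trans h1).symm
    have hpull := condExp_mul_of_stronglyMeasurable_left hyim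
      (by exact hterm_int i) hwiint
    calc ∫ ω, y ω i * w k ω i ∂μ
        = ∫ ω, (μ[(fun ω => y ω i) * (fun ω => w k ω i)|ℱ k]) ω ∂μ :=
          (integral_condExp hm).symm
      _ = 0 := by
          rw [integral_congr_ae (hpull.trans ?_), integral_zero]
          filter_upwards [hcw] with ω h
          simp [Pi.mul_apply, h]
  -- variance bound
  have hvar : ∫ ω, ‖w k ω‖ ^ 2 ∂μ ≤ ν ^ 2 / N k := by
    have h1 : ∫ ω, ‖w k ω‖ ^ 2 ∂μ
        = ∫ ω, (μ[fun ω => ‖w k ω‖ ^ 2|ℱ k]) ω ∂μ := (integral_condExp hm).symm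
    have h2 : ∫ ω, (μ[fun ω => ‖w k ω‖ ^ 2|ℱ k]) ω ∂μ
        ≤ ∫ _, (ν ^ 2 / N k : ℝ) ∂μ :=
      integral_mono_ae integrable_condExp (integrable_const _) (hwvar k)
    rw [h1]
    simpa using h2
  -- final assembly
  have hY : ∫ ω, ‖y ω‖ ^ 2 ∂μ ≤ c * ∫ ω, ‖d ω‖ ^ 2 ∂μ := by
    rw [← integral_const_mul]
    exact integral_mono hyint ((hxint k).const_mul c) hcontract
  have hW : α ^ 2 * ∫ ω, ‖w k ω‖ ^ 2 ∂μ ≤ α ^ 2 * (ν ^ 2 / N k) :=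
    mul_le_mul_of_nonneg_left hvar (sq_nonneg α)
  rw [hsplit, hcross]
  have : α ^ 2 * ν ^ 2 / N k = α ^ 2 * (ν ^ 2 / N k) := by ring
  rw [this]
  have hDI : ∫ ω, ‖d ω‖ ^ 2 ∂μ = ∫ ω, ‖x k ω - xstar‖ ^ 2 ∂μ := rfl
  rw [← hDI]
  simp only [mul_zero, sub_zero]
  exact add_le_add hY hW
end

section
/- Let f satisfy the standing assumptions and let the variance-reduced SGD iterates be generated by x_{k+1} = x_k − α(∇f(x_k) + w_{k,N_k}) with α ∈ (0, 2/(η+L)]. Set q = 1 − 2αηL/(η+L) and suppose the batch sizes are N_k = ⌈ρ₁^{−(k+1)}⌉ with ρ₁ ∈ (q, 1). Then for every k ≥ 1, E[‖x_k − x*‖²] ≤ ρ₁^k · ( E[‖x_0 − x*‖²] + α²ν²/(1 − q/ρ₁) ). -/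
open MeasureTheory Filter Real
open scoped Topology

section Aux

variable {E : Type*} [NormedAddCommGroup E] [InnerProductSpace ℝ E] [CompleteSpace E]

local notation "⟪" x ", " y "⟫" => @inner ℝ _ _ x y

lemma aux_lineDeriv (f : E → ℝ) (hf : ContDiff ℝ 1 f) (a d : E) (t : ℝ) :
    HasDerivAt (fun s : ℝ => f (a + s • d)) ⟪gradient f (a + t • d), d⟫ t := by
  have hdiff : DifferentiableAt ℝ f (a + t • d) := (hf.differentiable one_ne_zero).differentiableAt
  have hfd : HasFDerivAt f ((InnerProductSpace.toDual ℝ E) (gradient f (a + t • d))) (a + t • d) :=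
    hasGradientAt_iff_hasFDerivAt.mp hdiff.hasGradientAt
  have hc : HasDerivAt (fun s : ℝ => a + s • d) d t := by
    simpa using ((hasDerivAt_id t).smul_const d).const_add a
  exact hfd.comp_hasDerivAt t hc

lemma aux_lower (f : E → ℝ) (hf : ContDiff ℝ 1 f) {η : ℝ}
    (hsc : ∀ a b : E, η * ‖a - b‖ ^ 2 ≤ ⟪gradient f a - gradient f b, a - b⟫) (a b : E) :
    f a + ⟪gradient f a, b - a⟫ + η / 2 * ‖b - a‖ ^ 2 ≤ f b := by
  set d := b - a with hd
  set c : ℝ := ⟪gradient f a, d⟫ with hc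
  set F : ℝ → ℝ := fun t => f (a + t • d) - t * c - η / 2 * t ^ 2 * ‖d‖ ^ 2 with hF
  have hF' : ∀ t : ℝ, HasDerivAt F (⟪gradient f (a + t • d), d⟫ - c - η * t * ‖d‖ ^ 2) t := by
    intro t
    have h1 := aux_lineDeriv f hf a d t
    have h2 : HasDerivAt (fun s : ℝ => s * c) c t := by simpa using (hasDerivAt_id t).mul_const c
    have h3 : HasDerivAt (fun s : ℝ => η / 2 * s ^ 2 * ‖d‖ ^ 2) (η * t * ‖d‖ ^ 2) t := by
      have := ((hasDerivAt_pow 2 t).const_mul (η / 2)).mul_const (‖d‖ ^ 2)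
      refine this.congr_deriv ?_
      ring
    exact (h1.sub h2).sub h3
  have hmono : MonotoneOn F (Set.Icc (0:ℝ) 1) := by
    refine monotoneOn_of_deriv_nonneg (convex_Icc 0 1) ?_ ?_ ?_
    · exact fun t _ => ((hF' t).continuousAt).continuousWithinAt
    · exact fun t _ => ((hF' t).differentiableAt).differentiableWithinAt
    · intro t ht
      rw [interior_Icc, Set.mem_Ioo] at ht
      rw [(hF' t).deriv]
      have h4 := hsc (a + t • d) a
      have h5 : a + t • d - a = t • d := by abel
      rw [h5, real_inner_smul_right, inner_sub_left] at h4
      have h6 : ‖t • d‖ ^ 2 = t ^ 2 * ‖d‖ ^ 2 := by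
        rw [norm_smul, Real.norm_eq_abs, mul_pow, sq_abs]
      rw [h6] at h4
      nlinarith [ht.1, h4]
  have h01 := hmono (Set.mem_Icc.mpr ⟨le_refl 0, zero_le_one⟩)
    (Set.mem_Icc.mpr ⟨zero_le_one, le_refl 1⟩) zero_le_one
  have hF0 : F 0 = f a := by simp [hF]
  have hF1 : F 1 = f b - c - η / 2 * ‖d‖ ^ 2 := by
    have hb : a + d = b := by rw [hd]; abel
    simp [hF, hb]
  rw [hF0, hF1] at h01
  linarith

lemma aux_upper (f : E → ℝ) (hf : ContDiff ℝ 1 f) {L : ℝ} (hL : 0 ≤ L)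
    (hlip : ∀ a b : E, ‖gradient f a - gradient f b‖ ≤ L * ‖a - b‖) (a b : E) :
    f b ≤ f a + ⟪gradient f a, b - a⟫ + L / 2 * ‖b - a‖ ^ 2 := by
  set d := b - a with hd
  set c : ℝ := ⟪gradient f a, d⟫ with hc
  set F : ℝ → ℝ := fun t => f (a + t • d) - t * c - L / 2 * t ^ 2 * ‖d‖ ^ 2 with hF
  have hF' : ∀ t : ℝ, HasDerivAt F (⟪gradient f (a + t • d), d⟫ - c - L * t * ‖d‖ ^ 2) t := by
    intro t
    have h1 := aux_lineDeriv f hf a d t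
    have h2 : HasDerivAt (fun s : ℝ => s * c) c t := by simpa using (hasDerivAt_id t).mul_const c
    have h3 : HasDerivAt (fun s : ℝ => L / 2 * s ^ 2 * ‖d‖ ^ 2) (L * t * ‖d‖ ^ 2) t := by
      have := ((hasDerivAt_pow 2 t).const_mul (L / 2)).mul_const (‖d‖ ^ 2)
      refine this.congr_deriv ?_
      ring
    exact (h1.sub h2).sub h3
  have hmono : AntitoneOn F (Set.Icc (0:ℝ) 1) := by
    refine antitoneOn_of_deriv_nonpos (convex_Icc 0 1) ?_ ?_ ?_
    · exact fun t _ => ((hF' t).continuousAt).continuousWithinAt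
    · exact fun t _ => ((hF' t).differentiableAt).differentiableWithinAt
    · intro t ht
      rw [interior_Icc, Set.mem_Ioo] at ht
      rw [(hF' t).deriv]
      have h4 := hlip (a + t • d) a
      have h5 : a + t • d - a = t • d := by abel
      rw [h5] at h4
      have h6 : ‖t • d‖ = t * ‖d‖ := by
        rw [norm_smul, Real.norm_eq_abs, abs_of_pos ht.1]
      rw [h6] at h4
      have h7 := real_inner_le_norm (gradient f (a + t • d) - gradient f a) d
      rw [inner_sub_left] at h7
      nlinarith [norm_nonneg d, ht.1]
  have h01 := hmono (Set.mem_Icc.mpr ⟨le_refl 0, zero_le_one⟩)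
    (Set.mem_Icc.mpr ⟨zero_le_one, le_refl 1⟩) zero_le_one
  have hF0 : F 0 = f a := by simp [hF]
  have hF1 : F 1 = f b - c - L / 2 * ‖d‖ ^ 2 := by
    have hb : a + d = b := by rw [hd]; abel
    simp [hF, hb]
  rw [hF0, hF1] at h01
  linarith

lemma aux_bregman (h : E → ℝ) (g : E → E) {M : ℝ} (hM : 0 < M)
    (hlow : ∀ a b : E, h a + ⟪g a, b - a⟫ ≤ h b)
    (hup : ∀ a b : E, h b ≤ h a + ⟪g a, b - a⟫ + M / 2 * ‖b - a‖ ^ 2) (a b : E) :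
    (1 / M) * ‖g a - g b‖ ^ 2 ≤ ⟪g a - g b, a - b⟫ := by
  have breg : ∀ a b : E, h a + ⟪g a, b - a⟫ + 1 / (2 * M) * ‖g b - g a‖ ^ 2 ≤ h b := by
    intro a b
    set Γ := g b - g a with hΓ
    set z := b - (1 / M) • Γ with hz
    have h1 := hlow a z
    have h2 := hup b z
    have hza : z - a = (b - a) - (1 / M) • Γ := by rw [hz]; abel
    have hzb : z - b = -((1 / M) • Γ) := by rw [hz]; abel
    have e1 : ⟪g a, z - a⟫ = ⟪g a, b - a⟫ - (1 / M) * ⟪g a, Γ⟫ := by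
      rw [hza, inner_sub_right, real_inner_smul_right]
    have e2 : ⟪g b, z - b⟫ = -((1 / M) * ⟪g b, Γ⟫) := by
      rw [hzb, inner_neg_right, real_inner_smul_right]
    have e3 : ‖z - b‖ ^ 2 = (1 / M) ^ 2 * ‖Γ‖ ^ 2 := by
      rw [hzb, norm_neg, norm_smul, Real.norm_eq_abs, mul_pow, sq_abs]
    have e4 : ⟪g b, Γ⟫ - ⟪g a, Γ⟫ = ‖Γ‖ ^ 2 := by
      rw [← inner_sub_left, ← hΓ, real_inner_self_eq_norm_sq]
    rw [e1] at h1
    rw [e2, e3] at h2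
    have e5 : M / 2 * ((1 / M) ^ 2 * ‖Γ‖ ^ 2) = 1 / (2 * M) * ‖Γ‖ ^ 2 := by
      field_simp
    have e6 : (1 / M) * ⟪g b, Γ⟫ - (1 / M) * ⟪g a, Γ⟫ = (1 / M) * ‖Γ‖ ^ 2 := by
      rw [← mul_sub, e4]
    have e7 : (1 / M) * ‖Γ‖ ^ 2 = 2 * (1 / (2 * M) * ‖Γ‖ ^ 2) := by
      field_simp
    nlinarith [h1, h2]
  have h1 := breg a b
  have h2 := breg b a
  have e1 : ⟪g b, a - b⟫ = -⟪g b, b - a⟫ := by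
    rw [← inner_neg_right]; congr 1; abel
  have e2 : ⟪g a - g b, a - b⟫ = -⟪g a, b - a⟫ - ⟪g b, a - b⟫ := by
    rw [inner_sub_left, ← inner_neg_right]
    congr 2
    abel
  have e3 : ‖g a - g b‖ = ‖g b - g a‖ := norm_sub_rev _ _
  have e4 : (1 : ℝ) / M = 2 * (1 / (2 * M)) := by field_simp
  have e3' : ‖g a - g b‖ ^ 2 = ‖g b - g a‖ ^ 2 := by rw [e3]
  rw [e3'] at h2
  rw [e2, e3', e4]
  linarith

lemma aux_key (f : E → ℝ) (hf : ContDiff ℝ 1 f) {η L : ℝ} (hη : 0 < η) (hηL : η ≤ L)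
    (hlip : ∀ a b : E, ‖gradient f a - gradient f b‖ ≤ L * ‖a - b‖)
    (hsc : ∀ a b : E, η * ‖a - b‖ ^ 2 ≤ ⟪gradient f a - gradient f b, a - b⟫) (a b : E) :
    ‖gradient f a - gradient f b‖ ^ 2 + η * L * ‖a - b‖ ^ 2
      ≤ (η + L) * ⟪gradient f a - gradient f b, a - b⟫ := by
  rcases eq_or_lt_of_le hηL with hEq | hlt
  · subst hEq
    have h1 := hsc a b
    have h2 := hlip a b
    have h3 : ‖gradient f a - gradient f b‖ ^ 2 ≤ η ^ 2 * ‖a - b‖ ^ 2 := by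
      nlinarith [norm_nonneg (gradient f a - gradient f b), norm_nonneg (a - b)]
    nlinarith [h1, h3]
  · set h : E → ℝ := fun z => f z - η / 2 * ‖z‖ ^ 2 with hh
    set g : E → E := fun z => gradient f z - η • z with hg
    have hid : ∀ u v : E, η / 2 * ‖v - u‖ ^ 2
        = η / 2 * ‖v‖ ^ 2 - η / 2 * ‖u‖ ^ 2 - η * ⟪u, v - u⟫ := by
      intro u v
      have h1 := norm_sub_sq_real v u
      have h2 : ⟪u, v - u⟫ = ⟪v, u⟫ - ‖u‖ ^ 2 := by
        rw [inner_sub_right, real_inner_self_eq_norm_sq, real_inner_comm]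
      nlinarith [h1, h2]
    have hlow' : ∀ u v : E, h u + ⟪g u, v - u⟫ ≤ h v := by
      intro u v
      have h1 := aux_lower f hf hsc u v
      have h2 : ⟪g u, v - u⟫ = ⟪gradient f u, v - u⟫ - η * ⟪u, v - u⟫ := by
        rw [hg]; rw [inner_sub_left, real_inner_smul_left]
      have h3 := hid u v
      simp only [hh, h2]
      linarith
    have hup' : ∀ u v : E, h v ≤ h u + ⟪g u, v - u⟫ + (L - η) / 2 * ‖v - u‖ ^ 2 := by
      intro u v
      have h1 := aux_upper f hf (by linarith : (0:ℝ) ≤ L) hlip u v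
      have h2 : ⟪g u, v - u⟫ = ⟪gradient f u, v - u⟫ - η * ⟪u, v - u⟫ := by
        rw [hg]; rw [inner_sub_left, real_inner_smul_left]
      have h3 := hid u v
      have h4 : (L - η) / 2 * ‖v - u‖ ^ 2 = L / 2 * ‖v - u‖ ^ 2 - η / 2 * ‖v - u‖ ^ 2 := by ring
      simp only [hh, h2]
      linarith
    have hco := aux_bregman h g (by linarith : (0:ℝ) < L - η) hlow' hup' a b
    have hgg : g a - g b = (gradient f a - gradient f b) - η • (a - b) := by
      rw [hg]; simp only [smul_sub]; abel
    have e1 : ‖g a - g b‖ ^ 2 = ‖gradient f a - gradient f b‖ ^ 2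
        - 2 * (η * ⟪gradient f a - gradient f b, a - b⟫) + η ^ 2 * ‖a - b‖ ^ 2 := by
      rw [hgg, norm_sub_sq_real, real_inner_smul_right, norm_smul, Real.norm_eq_abs,
        abs_of_pos hη, mul_pow]
    have e2 : ⟪g a - g b, a - b⟫ = ⟪gradient f a - gradient f b, a - b⟫ - η * ‖a - b‖ ^ 2 := by
      rw [hgg, inner_sub_left, real_inner_smul_left, real_inner_self_eq_norm_sq]
    rw [e1, e2] at hco
    have hM : (0:ℝ) < L - η := by linarith
    have hmul := mul_le_mul_of_nonneg_left hco hM.le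
    rw [← mul_assoc, mul_one_div, div_self hM.ne', one_mul] at hmul
    nlinarith [hmul]

lemma aux_gradstar (f : E → ℝ) (hf : ContDiff ℝ 1 f) (xstar : E)
    (hmin : ∀ z, f xstar ≤ f z) : gradient f xstar = 0 := by
  have hd : DifferentiableAt ℝ f xstar := (hf.differentiable one_ne_zero).differentiableAt
  have hloc : IsLocalMin f xstar := Filter.Eventually.of_forall hmin
  have h0 : HasFDerivAt f (0 : E →L[ℝ] ℝ) xstar := by
    have := hd.hasFDerivAt
    rwa [hloc.fderiv_eq_zero] at this
  have := hasFDerivAt_iff_hasGradientAt.mp h0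
  simpa using this.gradient

lemma aux_qnn {η L α q : ℝ} (hη : 0 < η) (hηL : η ≤ L) (hα : 0 < α)
    (hα' : α ≤ 2 / (η + L)) (hq : q = 1 - 2 * α * η * L / (η + L)) : 0 ≤ q := by
  have hs : 0 < η + L := by linarith
  have hαs : α * (η + L) ≤ 2 := (le_div_iff₀ hs).mp hα'
  rw [hq, sub_nonneg, div_le_one hs]
  nlinarith [sq_nonneg (η - L), mul_pos hη (hη.trans_le hηL), hαs]

lemma aux_contract (f : E → ℝ) (hf : ContDiff ℝ 1 f) {η L α q : ℝ} (hη : 0 < η) (hηL : η ≤ L)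
    (hlip : ∀ a b : E, ‖gradient f a - gradient f b‖ ≤ L * ‖a - b‖)
    (hsc : ∀ a b : E, η * ‖a - b‖ ^ 2 ≤ ⟪gradient f a - gradient f b, a - b⟫)
    (xstar : E) (hmin : ∀ z, f xstar ≤ f z)
    (hα : 0 < α) (hα' : α ≤ 2 / (η + L)) (hq : q = 1 - 2 * α * η * L / (η + L)) (a : E) :
    ‖a - xstar - α • gradient f a‖ ^ 2 ≤ q * ‖a - xstar‖ ^ 2 := by
  have hs : 0 < η + L := by linarith
  have hαs : α * (η + L) ≤ 2 := (le_div_iff₀ hs).mp hα'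
  have hkey := aux_key f hf hη hηL hlip hsc a xstar
  rw [aux_gradstar f hf xstar hmin, sub_zero] at hkey
  have e1 : ‖a - xstar - α • gradient f a‖ ^ 2 = ‖a - xstar‖ ^ 2
      - 2 * (α * ⟪a - xstar, gradient f a⟫) + α ^ 2 * ‖gradient f a‖ ^ 2 := by
    rw [norm_sub_sq_real, real_inner_smul_right, norm_smul, Real.norm_eq_abs,
      abs_of_pos hα, mul_pow]
  have e2 : ⟪a - xstar, gradient f a⟫ = ⟪gradient f a, a - xstar⟫ := real_inner_comm _ _
  rw [e1, e2]
  have hq' : q * (η + L) = (η + L) - 2 * α * η * L := by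
    rw [hq]; field_simp
  have hA : (0:ℝ) ≤ ‖gradient f a‖ ^ 2 := sq_nonneg _
  have hD : (0:ℝ) ≤ ‖a - xstar‖ ^ 2 := sq_nonneg _
  -- multiply goal through by (η + L)
  rw [← mul_le_mul_iff_right₀ hs]
  nlinarith [hkey, mul_le_mul_of_nonneg_right hαs (mul_nonneg hα.le hA),
    mul_le_mul_of_nonneg_left hkey (mul_nonneg (by norm_num : (0:ℝ) ≤ 2) hα.le), hq']

end Aux

lemma aux_coord {m : ℕ} (y : EuclideanSpace ℝ (Fin m)) (i : Fin m) : |y i| ≤ ‖y‖ := by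
  have h := abs_real_inner_le_norm (EuclideanSpace.single i (1:ℝ)) y
  simpa [EuclideanSpace.inner_single_left] using h

lemma aux_proj {m : ℕ} (i : Fin m) (y : EuclideanSpace ℝ (Fin m)) :
    (EuclideanSpace.proj i : EuclideanSpace ℝ (Fin m) →L[ℝ] ℝ) y = y i := rfl

/-- **Proposition 1 (geometric rate for variance-reduced SGD with geometric batch sizes).** -/
theorem stmt_3
    {m : ℕ} {Ω : Type*} {m0 : MeasurableSpace Ω} {μ : Measure Ω}
    [IsProbabilityMeasure μ] (ℱ : Filtration ℕ m0)
    (f : EuclideanSpace ℝ (Fin m) → ℝ) (xstar : EuclideanSpace ℝ (Fin m))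
    (x w : ℕ → Ω → EuclideanSpace ℝ (Fin m)) (N : ℕ → ℕ)
    (η L ν α q ρ₁ : ℝ)
    (hη : 0 < η) (hηL : η ≤ L) (hν : 0 < ν)
    (hf : ContDiff ℝ 1 f)
    (hlip : ∀ a b, ‖gradient f a - gradient f b‖ ≤ L * ‖a - b‖)
    (hsc : ∀ a b, η * ‖a - b‖ ^ 2 ≤ (inner ℝ (gradient f a - gradient f b) (a - b) : ℝ))
    (hmin : ∀ z, f xstar ≤ f z)
    (hadapted : ∀ k, StronglyMeasurable[ℱ k] (x k))
    (hwint : ∀ k, Integrable (w k) μ)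
    (hwsqint : ∀ k, Integrable (fun ω => ‖w k ω‖ ^ 2) μ)
    (hw0 : ∀ k, μ[w k | ℱ k] =ᵐ[μ] 0)
    (hwvar : ∀ k, μ[fun ω => ‖w k ω‖ ^ 2 | ℱ k] ≤ᵐ[μ] fun _ => ν ^ 2 / N k)
    (hxint : ∀ k, Integrable (fun ω => ‖x k ω - xstar‖ ^ 2) μ)
    (hα : 0 < α) (hα' : α ≤ 2 / (η + L))
    (hq : q = 1 - 2 * α * η * L / (η + L))
    (hρ₁ : ρ₁ ∈ Set.Ioo q 1)
    (hN : ∀ k, N k = ⌈(ρ₁ ^ (k + 1))⁻¹⌉₊)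
    (hrec : ∀ k ω, x (k + 1) ω = x k ω - α • (gradient f (x k ω) + w k ω)) :
    ∀ k, 1 ≤ k →
      ∫ ω, ‖x k ω - xstar‖ ^ 2 ∂μ ≤
        ρ₁ ^ k * ((∫ ω, ‖x 0 ω - xstar‖ ^ 2 ∂μ) + α ^ 2 * ν ^ 2 / (1 - q / ρ₁)) := by
  classical
  have hs : (0:ℝ) < η + L := by linarith
  have hq0 : 0 ≤ q := aux_qnn hη hηL hα hα' hq
  have hρpos : 0 < ρ₁ := lt_of_le_of_lt hq0 hρ₁.1
  -- one-step recursion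
  have hstep : ∀ k, ∫ ω, ‖x (k + 1) ω - xstar‖ ^ 2 ∂μ
      ≤ q * (∫ ω, ‖x k ω - xstar‖ ^ 2 ∂μ) + α ^ 2 * ν ^ 2 * ρ₁ ^ (k + 1) := by
    intro k
    set v : Ω → EuclideanSpace ℝ (Fin m) :=
      fun ω => x k ω - xstar - α • gradient f (x k ω) with hv
    have hgradcont : Continuous (gradient f) := by
      have h1 : Continuous (fderiv ℝ f) := hf.continuous_fderiv one_ne_zero
      exact ((InnerProductSpace.toDual ℝ (EuclideanSpace ℝ (Fin m))).symm.continuous).comp h1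
    have hvmeas : StronglyMeasurable[ℱ k] v := by
      have hcont : Continuous
          (fun z : EuclideanSpace ℝ (Fin m) => z - xstar - α • gradient f z) :=
        (continuous_id.sub continuous_const).sub (hgradcont.const_smul α)
      exact hcont.comp_stronglyMeasurable (hadapted k)
    have hvle : ∀ ω, ‖v ω‖ ^ 2 ≤ q * ‖x k ω - xstar‖ ^ 2 := fun ω =>
      aux_contract f hf hη hηL hlip hsc xstar hmin hα hα' hq (x k ω)
    have hvaesm : AEStronglyMeasurable v μ := (hvmeas.mono (ℱ.le k)).aestronglyMeasurable
    have hvsq_aesm : AEStronglyMeasurable (fun ω => ‖v ω‖ ^ 2) μ := by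
      have := hvaesm.norm.mul hvaesm.norm
      simpa [pow_two, Pi.mul_def] using this
    have hv2int : Integrable (fun ω => ‖v ω‖ ^ 2) μ := by
      refine Integrable.mono' ((hxint k).const_mul q) hvsq_aesm ?_
      exact Filter.Eventually.of_forall fun ω => by
        rw [Real.norm_eq_abs, abs_of_nonneg (sq_nonneg _)]; exact hvle ω
    have hwiint : ∀ i : Fin m, Integrable (fun ω => w k ω i) μ := by
      intro i
      have := (EuclideanSpace.proj i :
        EuclideanSpace ℝ (Fin m) →L[ℝ] ℝ).integrable_comp (hwint k)
      simpa [aux_proj] using this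
    have hvii : ∀ i : Fin m, StronglyMeasurable[ℱ k] (fun ω => v ω i) := by
      intro i
      have := ((EuclideanSpace.proj i :
        EuclideanSpace ℝ (Fin m) →L[ℝ] ℝ).continuous).comp_stronglyMeasurable hvmeas
      simpa [Function.comp, aux_proj] using this
    have hprod : ∀ i : Fin m, Integrable (fun ω => v ω i * w k ω i) μ := by
      intro i
      refine Integrable.mono' ((hv2int.add (hwsqint k)).const_mul (1/2)) ?_ ?_
      · exact (((hvii i).mono (ℱ.le k)).aestronglyMeasurable).mul
          (hwiint i).aestronglyMeasurable
      · refine Filter.Eventually.of_forall fun ω => ?_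
        have h1 : |v ω i| ≤ ‖v ω‖ := aux_coord _ i
        have h2 : |w k ω i| ≤ ‖w k ω‖ := aux_coord _ i
        rw [Real.norm_eq_abs, abs_mul]
        simp only [Pi.add_apply]
        nlinarith [abs_nonneg (v ω i), abs_nonneg (w k ω i), norm_nonneg (v ω),
          norm_nonneg (w k ω), sq_nonneg (‖v ω‖ - ‖w k ω‖)]
    have hrwi : ∀ ω, (inner ℝ (v ω) (w k ω) : ℝ) = ∑ i, v ω i * w k ω i := by
      intro ω
      rw [PiLp.inner_apply]
      simp [RCLike.inner_apply, mul_comm]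
    have hcrossint : Integrable (fun ω => (inner ℝ (v ω) (w k ω) : ℝ)) μ := by
      have heq : (fun ω => (inner ℝ (v ω) (w k ω) : ℝ)) = fun ω => ∑ i, v ω i * w k ω i :=
        funext hrwi
      rw [heq]
      exact integrable_finset_sum _ fun i _ => hprod i
    have hwi0 : ∀ i : Fin m, μ[(fun ω => w k ω i)|ℱ k] =ᵐ[μ] 0 := by
      intro i
      refine (ae_eq_condExp_of_forall_setIntegral_eq (ℱ.le k) (hwiint i) ?_ ?_ ?_).symm
      · exact fun s _ _ => (integrable_zero _ _ _).integrableOn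
      · intro s hs hμs
        have hint0 : ∫ ω in s, w k ω ∂μ = 0 := by
          rw [← setIntegral_condExp (ℱ.le k) (hwint k) hs]
          calc ∫ ω in s, (μ[w k|ℱ k]) ω ∂μ
              = ∫ ω in s, (0 : Ω → EuclideanSpace ℝ (Fin m)) ω ∂μ :=
                integral_congr_ae (ae_restrict_of_ae (hw0 k))
            _ = 0 := by simp
        have hcomm := (EuclideanSpace.proj i :
          EuclideanSpace ℝ (Fin m) →L[ℝ] ℝ).integral_comp_comm ((hwint k).restrict (s := s))
        rw [hint0] at hcomm
        simp only [map_zero] at hcomm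
        have h3 : ∫ ω in s, w k ω i ∂μ = 0 := hcomm
        simp [h3]
      · exact StronglyMeasurable.aestronglyMeasurable
          (stronglyMeasurable_const : StronglyMeasurable[ℱ k] (fun _ : Ω => (0:ℝ)))
    have hcross0 : ∫ ω, (inner ℝ (v ω) (w k ω) : ℝ) ∂μ = 0 := by
      have h1 : ∫ ω, (inner ℝ (v ω) (w k ω) : ℝ) ∂μ = ∑ i, ∫ ω, v ω i * w k ω i ∂μ := by
        rw [integral_congr_ae (Filter.Eventually.of_forall hrwi)]
        exact integral_finset_sum _ fun i _ => hprod i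
      rw [h1]
      refine Finset.sum_eq_zero fun i _ => ?_
      have hpull := condExp_mul_of_stronglyMeasurable_left (hvii i) (hprod i) (hwiint i)
      have hzero : (fun ω => v ω i) * μ[(fun ω => w k ω i)|ℱ k] =ᵐ[μ] (fun _ => (0:ℝ)) := by
        filter_upwards [hwi0 i] with ω hω
        simp only [Pi.mul_apply, hω, Pi.zero_apply, mul_zero]
      calc ∫ ω, v ω i * w k ω i ∂μ
          = ∫ ω, (μ[(fun ω => v ω i * w k ω i)|ℱ k]) ω ∂μ := (integral_condExp (ℱ.le k)).symm
        _ = ∫ _ω, (0:ℝ) ∂μ := integral_congr_ae (hpull.trans hzero)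
        _ = 0 := by simp
    have hwsq : ∫ ω, ‖w k ω‖ ^ 2 ∂μ ≤ ν ^ 2 / N k := by
      rw [← integral_condExp (ℱ.le k) (f := fun ω => ‖w k ω‖ ^ 2)]
      have := integral_mono_ae integrable_condExp
        (integrable_const (ν ^ 2 / (N k : ℝ))) (hwvar k)
      simpa using this
    have hNbound : ν ^ 2 / (N k : ℝ) ≤ ν ^ 2 * ρ₁ ^ (k + 1) := by
      have h1 : (ρ₁ ^ (k + 1))⁻¹ ≤ (N k : ℝ) := by rw [hN k]; exact Nat.le_ceil _
      have hppos : 0 < ρ₁ ^ (k + 1) := pow_pos hρpos _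
      have hNpos : (0:ℝ) < N k := lt_of_lt_of_le (inv_pos.2 hppos) h1
      rw [div_le_iff₀ hNpos]
      have h2 : (1:ℝ) ≤ ρ₁ ^ (k + 1) * N k := by
        calc (1:ℝ) = ρ₁ ^ (k + 1) * (ρ₁ ^ (k + 1))⁻¹ := (mul_inv_cancel₀ hppos.ne').symm
          _ ≤ ρ₁ ^ (k + 1) * N k := mul_le_mul_of_nonneg_left h1 hppos.le
      nlinarith [sq_nonneg ν, h2]
    have hexp : ∀ ω, ‖x (k + 1) ω - xstar‖ ^ 2
        = ‖v ω‖ ^ 2 - 2 * α * (inner ℝ (v ω) (w k ω) : ℝ) + α ^ 2 * ‖w k ω‖ ^ 2 := by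
      intro ω
      have hsplit : x (k + 1) ω - xstar = v ω - α • w k ω := by
        rw [hrec k ω]
        simp only [hv, smul_add]
        abel
      rw [hsplit, norm_sub_sq_real, real_inner_smul_right, norm_smul, Real.norm_eq_abs,
        abs_of_pos hα, mul_pow]
      ring
    have hsum : ∫ ω, ‖x (k + 1) ω - xstar‖ ^ 2 ∂μ
        = (∫ ω, ‖v ω‖ ^ 2 ∂μ) - 2 * α * (∫ ω, (inner ℝ (v ω) (w k ω) : ℝ) ∂μ)
          + α ^ 2 * (∫ ω, ‖w k ω‖ ^ 2 ∂μ) := by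
      calc ∫ ω, ‖x (k + 1) ω - xstar‖ ^ 2 ∂μ
          = ∫ ω, (‖v ω‖ ^ 2 - 2 * α * (inner ℝ (v ω) (w k ω) : ℝ)
              + α ^ 2 * ‖w k ω‖ ^ 2) ∂μ :=
            integral_congr_ae (Filter.Eventually.of_forall fun ω => hexp ω)
        _ = _ := by
            have i3 : Integrable (fun ω => 2 * α * (inner ℝ (v ω) (w k ω) : ℝ)) μ :=
              hcrossint.const_mul (2 * α)
            have i1 : Integrable
                (fun ω => ‖v ω‖ ^ 2 - 2 * α * (inner ℝ (v ω) (w k ω) : ℝ)) μ :=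
              hv2int.sub i3
            have i2 : Integrable (fun ω => α ^ 2 * ‖w k ω‖ ^ 2) μ :=
              (hwsqint k).const_mul (α ^ 2)
            rw [integral_add i1 i2, integral_sub hv2int i3,
              integral_const_mul, integral_const_mul]
    have hvint_le : ∫ ω, ‖v ω‖ ^ 2 ∂μ ≤ q * ∫ ω, ‖x k ω - xstar‖ ^ 2 ∂μ := by
      have := integral_mono hv2int ((hxint k).const_mul q) fun ω => hvle ω
      rwa [integral_const_mul] at this
    have hwle : α ^ 2 * (∫ ω, ‖w k ω‖ ^ 2 ∂μ) ≤ α ^ 2 * (ν ^ 2 * ρ₁ ^ (k + 1)) :=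
      mul_le_mul_of_nonneg_left (le_trans hwsq hNbound) (sq_nonneg α)
    rw [hsum, hcross0]
    calc (∫ ω, ‖v ω‖ ^ 2 ∂μ) - 2 * α * 0 + α ^ 2 * (∫ ω, ‖w k ω‖ ^ 2 ∂μ)
        ≤ q * (∫ ω, ‖x k ω - xstar‖ ^ 2 ∂μ) + α ^ 2 * (ν ^ 2 * ρ₁ ^ (k + 1)) := by
          linarith [hvint_le, hwle]
      _ = q * (∫ ω, ‖x k ω - xstar‖ ^ 2 ∂μ) + α ^ 2 * ν ^ 2 * ρ₁ ^ (k + 1) := by ring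
  -- induction
  have hE0 : 0 ≤ ∫ ω, ‖x 0 ω - xstar‖ ^ 2 ∂μ := integral_nonneg fun ω => sq_nonneg _
  have hqρ : q / ρ₁ < 1 := (div_lt_one hρpos).2 hρ₁.1
  have hsub : 0 < 1 - q / ρ₁ := by linarith
  set C := α ^ 2 * ν ^ 2 / (1 - q / ρ₁) with hC
  have hCid : (1 - q / ρ₁) * C = α ^ 2 * ν ^ 2 := by
    rw [hC, mul_comm, div_mul_cancel₀ _ (ne_of_gt hsub)]
  have hC0 : 0 ≤ C := div_nonneg (mul_nonneg (sq_nonneg α) (sq_nonneg ν)) (by linarith)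
  have h6 : α ^ 2 * ν ^ 2 * ρ₁ = (ρ₁ - q) * C := by
    have h7 : (1 - q / ρ₁) * ρ₁ = ρ₁ - q := by
      rw [sub_mul, one_mul, div_mul_cancel₀ _ hρpos.ne']
    calc α ^ 2 * ν ^ 2 * ρ₁ = (1 - q / ρ₁) * C * ρ₁ := by rw [hCid]
      _ = (1 - q / ρ₁) * ρ₁ * C := by ring
      _ = (ρ₁ - q) * C := by rw [h7]
  have main : ∀ k, ∫ ω, ‖x k ω - xstar‖ ^ 2 ∂μ
      ≤ ρ₁ ^ k * ((∫ ω, ‖x 0 ω - xstar‖ ^ 2 ∂μ) + C) := by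
    intro k
    induction k with
    | zero =>
      rw [pow_zero, one_mul]
      linarith [hC0]
    | succ n ih =>
      have h1 := hstep n
      rw [pow_succ ρ₁ n] at h1 ⊢
      have hPnn : (0:ℝ) ≤ ρ₁ ^ n := pow_nonneg hρpos.le n
      have h2 : q * (∫ ω, ‖x n ω - xstar‖ ^ 2 ∂μ)
          ≤ q * (ρ₁ ^ n * ((∫ ω, ‖x 0 ω - xstar‖ ^ 2 ∂μ) + C)) :=
        mul_le_mul_of_nonneg_left ih hq0
      have h6n : α ^ 2 * ν ^ 2 * (ρ₁ ^ n * ρ₁) = (ρ₁ - q) * C * ρ₁ ^ n := by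
        calc α ^ 2 * ν ^ 2 * (ρ₁ ^ n * ρ₁) = α ^ 2 * ν ^ 2 * ρ₁ * ρ₁ ^ n := by ring
          _ = (ρ₁ - q) * C * ρ₁ ^ n := by rw [h6]
      nlinarith [h1, h2, h6n, mul_nonneg (mul_nonneg hPnn (sub_nonneg.2 hρ₁.1.le)) hE0]
  exact fun k _ => main k
end

section
/- Let f satisfy the standing assumptions and let the variance-reduced accelerated SGD iterates be generated by y_{k+1} = x_k − α(∇f(x_k) + w_{k,N_k}) and x_{k+1} = y_{k+1} + β(y_{k+1} − y_k) with x_0 = y_0, α ∈ (0, 1/L], γ = √(αη), β = (1−γ)/(1+γ), and polynomially increasing batch sizes N_k = ⌈(k+1)^v⌉ for some v > 0. Then there exists a constant C(v) > 0 such that E[f(y_k)] − f* ≤ C(v) · k^{−v} for all k ≥ 1. -/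
open MeasureTheory Filter Real
open scoped Topology InnerProductSpace
set_option maxHeartbeats 1000000

namespace Stmt13Aux


variable {E : Type*} [NormedAddCommGroup E] [InnerProductSpace ℝ E] [CompleteSpace E]

lemma grad_cont {f : E → ℝ} (hf : ContDiff ℝ 1 f) : Continuous (gradient f) := by
  have h1 : Continuous (fderiv ℝ f) := hf.continuous_fderiv one_ne_zero
  exact (InnerProductSpace.toDual ℝ E).symm.continuous.comp h1

lemma seg_deriv {f : E → ℝ} (hf : ContDiff ℝ 1 f) (a d : E) (t : ℝ) :
    HasDerivAt (fun s : ℝ => f (a + s • d)) ⟪gradient f (a + t • d), d⟫_ℝ t := by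
  have hdiff : DifferentiableAt ℝ f (a + t • d) := (hf.differentiable one_ne_zero).differentiableAt
  have hfd : HasFDerivAt f ((InnerProductSpace.toDual ℝ E) (gradient f (a + t • d))) (a + t • d) :=
    hdiff.hasGradientAt
  have hpath : HasDerivAt (fun s : ℝ => a + s • d) d t := by
    simpa using ((hasDerivAt_id t).smul_const d).const_add a
  have := hfd.comp_hasDerivAt t hpath
  simpa [InnerProductSpace.toDual_apply_apply, Function.comp_def] using this

lemma seg_cont {f : E → ℝ} (hf : ContDiff ℝ 1 f) (a d : E) :
    Continuous (fun t : ℝ => ⟪gradient f (a + t • d), d⟫_ℝ) := by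
  exact ((grad_cont hf).comp
    (continuous_const.add (continuous_id.smul continuous_const))).inner continuous_const

lemma seg_ftc {f : E → ℝ} (hf : ContDiff ℝ 1 f) (a d : E) :
    f (a + d) - f a = ∫ t in (0:ℝ)..1, ⟪gradient f (a + t • d), d⟫_ℝ := by
  have h := intervalIntegral.integral_eq_sub_of_hasDerivAt
    (f := fun s : ℝ => f (a + s • d)) (f' := fun t => ⟪gradient f (a + t • d), d⟫_ℝ)
    (a := 0) (b := 1) (fun t _ => seg_deriv hf a d t)
    ((seg_cont hf a d).intervalIntegrable _ _)
  simpa using h.symm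

lemma lin_integral (A c : ℝ) :
    (∫ t in (0:ℝ)..1, (A + c * t)) = A + c / 2 := by
  rw [intervalIntegral.integral_add intervalIntegrable_const
    ((continuous_id'.intervalIntegrable _ _).const_mul _), intervalIntegral.integral_const,
    intervalIntegral.integral_const_mul, integral_id]
  norm_num; ring

lemma lower_quad {f : E → ℝ} {η : ℝ} (hf : ContDiff ℝ 1 f)
    (hsc : ∀ a b, η * ‖a - b‖ ^ 2 ≤ (inner ℝ (gradient f a - gradient f b) (a - b) : ℝ))
    (hη : 0 ≤ η) (a b : E) :
    f a + ⟪gradient f a, b - a⟫_ℝ + η/2 * ‖b - a‖^2 ≤ f b := by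
  set d := b - a with hd
  have hftc := seg_ftc hf a d
  have hab : a + d = b := by simp [hd]
  rw [hab] at hftc
  have hmono : ∫ t in (0:ℝ)..1, (⟪gradient f a, d⟫_ℝ + (η * ‖d‖^2) * t)
      ≤ ∫ t in (0:ℝ)..1, ⟪gradient f (a + t • d), d⟫_ℝ := by
    apply intervalIntegral.integral_mono_on (by norm_num)
    · exact (intervalIntegrable_const).add ((continuous_id'.intervalIntegrable _ _).const_mul _)
    · exact (seg_cont hf a d).intervalIntegrable _ _
    · intro t ht
      rcases eq_or_lt_of_le ht.1 with h0 | h0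
      · simp [← h0]
      · have key := hsc (a + t • d) a
        have h1 : a + t • d - a = t • d := by abel
        rw [h1] at key
        have h2 : (⟪gradient f (a + t • d) - gradient f a, t • d⟫_ℝ)
            = t * (⟪gradient f (a + t • d), d⟫_ℝ - ⟪gradient f a, d⟫_ℝ) := by
          rw [inner_sub_left, real_inner_smul_right, real_inner_smul_right]; ring
        rw [h2, norm_smul] at key
        have h3 : η * (‖t‖ * ‖d‖)^2 = t * ((η * ‖d‖^2) * t) := by
          rw [mul_pow, Real.norm_eq_abs, sq_abs]; ring
        rw [h3] at key
        have := le_of_mul_le_mul_left key h0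
        linarith
  rw [lin_integral, ← hftc] at hmono
  linarith

lemma upper_quad {f : E → ℝ} {L : ℝ} (hf : ContDiff ℝ 1 f)
    (hlip : ∀ a b, ‖gradient f a - gradient f b‖ ≤ L * ‖a - b‖) (a b : E) :
    f b ≤ f a + ⟪gradient f a, b - a⟫_ℝ + L/2 * ‖b - a‖^2 := by
  set d := b - a with hd
  have hftc := seg_ftc hf a d
  have hab : a + d = b := by simp [hd]
  rw [hab] at hftc
  have hmono : ∫ t in (0:ℝ)..1, ⟪gradient f (a + t • d), d⟫_ℝ
      ≤ ∫ t in (0:ℝ)..1, (⟪gradient f a, d⟫_ℝ + (L * ‖d‖^2) * t) := by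
    apply intervalIntegral.integral_mono_on (by norm_num)
    · exact (seg_cont hf a d).intervalIntegrable _ _
    · exact (intervalIntegrable_const).add ((continuous_id'.intervalIntegrable _ _).const_mul _)
    · intro t ht
      have key : ⟪gradient f (a + t • d) - gradient f a, d⟫_ℝ ≤ (L * ‖d‖^2) * t := by
        calc ⟪gradient f (a + t • d) - gradient f a, d⟫_ℝ
            ≤ ‖gradient f (a + t • d) - gradient f a‖ * ‖d‖ := real_inner_le_norm _ _
          _ ≤ (L * ‖a + t • d - a‖) * ‖d‖ :=
              mul_le_mul_of_nonneg_right (hlip _ _) (norm_nonneg _)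
          _ = (L * ‖d‖^2) * t := by
              have h1 : a + t • d - a = t • d := by abel
              rw [h1, norm_smul, Real.norm_eq_abs, abs_of_nonneg ht.1]; ring
      rw [inner_sub_left] at key
      linarith
  rw [lin_integral, ← hftc] at hmono
  linarith


variable {Ω : Type*} {mm : MeasurableSpace Ω} {m0 : MeasurableSpace Ω} {μ : Measure Ω}
  [IsProbabilityMeasure μ] {n : ℕ}

lemma coord_le_norm {n : ℕ} (x : EuclideanSpace ℝ (Fin n)) (i : Fin n) : |x i| ≤ ‖x‖ := by
  rw [EuclideanSpace.norm_eq]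
  calc |x i| = Real.sqrt (‖x i‖^2) := by rw [Real.sqrt_sq_eq_abs, Real.norm_eq_abs, abs_abs]
    _ ≤ Real.sqrt (∑ j, ‖x j‖^2) := Real.sqrt_le_sqrt
        (Finset.single_le_sum (f := fun j => ‖x j‖^2) (fun j _ => by positivity)
          (Finset.mem_univ i))

lemma condexp_proj_zero (hm : mm ≤ m0) {e : Ω → EuclideanSpace ℝ (Fin n)}
    (he : Integrable e μ) (hce : μ[e|mm] =ᵐ[μ] 0) (i : Fin n) :
    μ[fun ω => e ω i | mm] =ᵐ[μ] 0 := by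
  have hei : Integrable (fun ω => e ω i) μ := by
    have := (EuclideanSpace.proj i (𝕜 := ℝ)).integrable_comp he
    simpa using this
  have key : (0 : Ω → ℝ) =ᵐ[μ] μ[fun ω => e ω i | mm] := by
    apply ae_eq_condExp_of_forall_setIntegral_eq hm hei
    · intro s _ _; exact integrableOn_zero
    · intro s hs hμs
      have h1 : ∫ ω in s, e ω i ∂μ = (EuclideanSpace.proj i (𝕜 := ℝ)) (∫ ω in s, e ω ∂μ) := by
        rw [← ContinuousLinearMap.integral_comp_comm _ he.integrableOn]
        simp
      have h2 : ∫ ω in s, e ω ∂μ = 0 := by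
        rw [← setIntegral_condExp hm he hs]
        rw [setIntegral_congr_ae (hm s hs) (by filter_upwards [hce] with ω h _ using h)]
        simp
      simp [h1, h2]
    · exact aestronglyMeasurable_const
  exact key.symm

lemma integral_inner_zero (hm : mm ≤ m0) {h e : Ω → EuclideanSpace ℝ (Fin n)}
    (hh : StronglyMeasurable[mm] h)
    (hhL2 : Integrable (fun ω => ‖h ω‖^2) μ) (heL2 : Integrable (fun ω => ‖e ω‖^2) μ)
    (he : Integrable e μ) (hce : μ[e|mm] =ᵐ[μ] 0) :
    ∫ ω, ⟪h ω, e ω⟫_ℝ ∂μ = 0 := by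
  have hhm : StronglyMeasurable (h : Ω → EuclideanSpace ℝ (Fin n)) := hh.mono hm
  have hcoord_int : ∀ i : Fin n, Integrable (fun ω => h ω i * e ω i) μ := by
    intro i
    apply Integrable.mono' (μ := μ) ((hhL2.add heL2).const_mul (1/2))
    · exact ((EuclideanSpace.proj i (𝕜 := ℝ)).continuous.comp_stronglyMeasurable hhm).aestronglyMeasurable.mul
        ((EuclideanSpace.proj i (𝕜 := ℝ)).continuous.comp_aestronglyMeasurable he.1)
    · filter_upwards with ω
      have h1 : |h ω i| ≤ ‖h ω‖ := coord_le_norm _ i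
      have h2 : |e ω i| ≤ ‖e ω‖ := coord_le_norm _ i
      have h3 : |h ω i * e ω i| ≤ ‖h ω‖ * ‖e ω‖ := by
        rw [abs_mul]
        exact mul_le_mul h1 h2 (abs_nonneg _) (norm_nonneg _)
      have hb : ‖h ω‖ * ‖e ω‖ ≤ 1/2 * (‖h ω‖^2 + ‖e ω‖^2) := by
        nlinarith [sq_nonneg (‖h ω‖ - ‖e ω‖)]
      have : ‖h ω i * e ω i‖ ≤ 1/2 * (‖h ω‖^2 + ‖e ω‖^2) := le_trans h3 hb
      simpa [Pi.add_apply] using this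
  have hsum : ∀ ω, ⟪h ω, e ω⟫_ℝ = ∑ i : Fin n, h ω i * e ω i := by
    intro ω
    simp [PiLp.inner_apply, RCLike.inner_apply, conj_trivial]
    exact Finset.sum_congr rfl (fun _ _ => mul_comm _ _)
  have hzero : ∀ i : Fin n, ∫ ω, h ω i * e ω i ∂μ = 0 := by
    intro i
    have hei : Integrable (fun ω => e ω i) μ := by
      have := (EuclideanSpace.proj i (𝕜 := ℝ)).integrable_comp he
      simpa using this
    have hhi : StronglyMeasurable[mm] (fun ω => h ω i) :=
      (EuclideanSpace.proj i (𝕜 := ℝ)).continuous.comp_stronglyMeasurable hh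
    have hpull := condExp_mul_of_stronglyMeasurable_left hhi
      (hcoord_int i) hei
    have hczero := condexp_proj_zero hm he hce i
    have : μ[(fun ω => h ω i) * (fun ω => e ω i)|mm] =ᵐ[μ] 0 := by
      filter_upwards [hpull, hczero] with ω h1 h2
      simp [h1, h2]
    calc ∫ ω, h ω i * e ω i ∂μ = ∫ ω, ((fun ω => h ω i) * (fun ω => e ω i)) ω ∂μ := rfl
      _ = ∫ ω, (μ[(fun ω => h ω i) * (fun ω => e ω i)|mm]) ω ∂μ :=
          (integral_condExp hm).symm
      _ = 0 := by
          rw [integral_congr_ae this]; simp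
  calc ∫ ω, ⟪h ω, e ω⟫_ℝ ∂μ = ∫ ω, ∑ i : Fin n, h ω i * e ω i ∂μ :=
        integral_congr_ae (Filter.Eventually.of_forall hsum)
    _ = ∑ i : Fin n, ∫ ω, h ω i * e ω i ∂μ := integral_finset_sum _ (fun i _ => hcoord_int i)
    _ = 0 := by simp [hzero]

lemma integral_sq_le (hm : mm ≤ m0) {e : Ω → EuclideanSpace ℝ (Fin n)} {c : ℝ}
    (heL2 : Integrable (fun ω => ‖e ω‖^2) μ)
    (hvar : μ[fun ω => ‖e ω‖ ^ 2 | mm] ≤ᵐ[μ] fun _ => c) :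
    ∫ ω, ‖e ω‖^2 ∂μ ≤ c := by
  calc ∫ ω, ‖e ω‖^2 ∂μ = ∫ ω, (μ[fun ω => ‖e ω‖ ^ 2 | mm]) ω ∂μ :=
        (integral_condExp hm).symm
    _ ≤ ∫ _, c ∂μ := integral_mono_ae integrable_condExp (integrable_const c) hvar
    _ = c := by simp


variable {E : Type*} [NormedAddCommGroup E] [InnerProductSpace ℝ E]

lemma norm_comb4 (c1 c2 c3 c4 : ℝ) (p1 p2 p3 p4 : E) :
    ‖c1•p1 + c2•p2 + c3•p3 + c4•p4‖^2 =
      c1^2*‖p1‖^2 + c2^2*‖p2‖^2 + c3^2*‖p3‖^2 + c4^2*‖p4‖^2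
      + 2*(c1*c2)*⟪p1,p2⟫_ℝ + 2*(c1*c3)*⟪p1,p3⟫_ℝ + 2*(c1*c4)*⟪p1,p4⟫_ℝ
      + 2*(c2*c3)*⟪p2,p3⟫_ℝ + 2*(c2*c4)*⟪p2,p4⟫_ℝ + 2*(c3*c4)*⟪p3,p4⟫_ℝ := by
  simp only [← real_inner_self_eq_norm_sq]
  simp only [inner_add_left, inner_add_right, real_inner_smul_left, real_inner_smul_right]
  linear_combination (-(c1*c2)) * real_inner_comm p2 p1 - (c1*c3) * real_inner_comm p3 p1
    - (c1*c4) * real_inner_comm p4 p1 - (c2*c3) * real_inner_comm p3 p2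
    - (c2*c4) * real_inner_comm p4 p2 - (c3*c4) * real_inner_comm p4 p3

lemma norm_comb2 (c1 c2 : ℝ) (p1 p2 : E) :
    ‖c1•p1 + c2•p2‖^2 = c1^2*‖p1‖^2 + c2^2*‖p2‖^2 + 2*(c1*c2)*⟪p1,p2⟫_ℝ := by
  have := norm_comb4 c1 c2 0 0 p1 p2 p1 p1
  simpa using this

lemma onestep {α γ η L : ℝ} {fX fY fY' fs : ℝ} {X Y Y' Z Z' xs G eo : E}
    (hα : 0 < α) (hγ0 : 0 < γ) (hγ1 : γ ≤ 1) (hη : η = γ^2/α) (hαL : L * α ≤ 1)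
    (hY' : Y' = X - α • (G + eo))
    (hZ' : Z' = (1-γ) • Z + γ • X - (α/γ) • (G + eo))
    (hXY : X - Y = γ • (Z - X))
    (hup : fY' ≤ fX + ⟪G, Y' - X⟫_ℝ + L/2 * ‖Y' - X‖^2)
    (hlow1 : fX + ⟪G, Y - X⟫_ℝ ≤ fY)
    (hlow2 : fX + ⟪G, xs - X⟫_ℝ + η/2 * ‖xs - X‖^2 ≤ fs) :
    fY' - fs + η/2 * ‖Z' - xs‖^2 ≤ (1-γ)*(fY - fs + η/2 * ‖Z - xs‖^2) + α*‖eo‖^2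
      + ⟪α • G + (-(γ*(1-γ))) • (Z - xs) + (-(γ*γ)) • (X - xs), eo⟫_ℝ := by
  have hZx : Z' - xs = (1-γ)•(Z - xs) + γ•(X - xs) + (-(α/γ))•G + (-(α/γ))•eo := by
    rw [hZ']
    match_scalars <;> (field_simp; try ring)
  have hYx : Y' - X = (-α)•G + (-α)•eo := by
    rw [hY']; match_scalars <;> ring
  -- expansions
  have E1 : η/2 * ‖Z' - xs‖^2
      = η/2*((1-γ)^2*‖Z - xs‖^2 + γ^2*‖X - xs‖^2 + 2*(γ*(1-γ))*⟪Z - xs, X - xs⟫_ℝ)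
        - γ*(1-γ)*⟪Z - xs, G⟫_ℝ - γ*(1-γ)*⟪Z - xs, eo⟫_ℝ
        - (γ*γ)*⟪X - xs, G⟫_ℝ - (γ*γ)*⟪X - xs, eo⟫_ℝ
        + α/2*‖G‖^2 + α*⟪G, eo⟫_ℝ + α/2*‖eo‖^2 := by
    rw [hZx, norm_comb4, hη]
    field_simp
    ring
  have E2 : ‖Y' - X‖^2 = α^2*(‖G‖^2 + 2*⟪G, eo⟫_ℝ + ‖eo‖^2) := by
    rw [hYx, norm_comb2]; ring
  have E3 : ⟪G, Y' - X⟫_ℝ = -α*‖G‖^2 - α*⟪G, eo⟫_ℝ := by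
    rw [hYx, inner_add_right, real_inner_smul_right, real_inner_smul_right,
      real_inner_self_eq_norm_sq]
    ring
  have E4 : ⟪G, Y - X⟫_ℝ = -γ*⟪Z - xs, G⟫_ℝ + γ*⟪X - xs, G⟫_ℝ := by
    have h1 : Y - X = (-γ) • ((Z - xs) - (X - xs)) := by
      have h2 : (Z - xs) - (X - xs) = Z - X := by abel
      rw [h2, neg_smul, ← hXY]; abel
    rw [h1, real_inner_smul_right, inner_sub_right]
    linear_combination γ * real_inner_comm G (Z - xs) - γ * real_inner_comm G (X - xs)
  have E5 : ⟪G, xs - X⟫_ℝ = -⟪X - xs, G⟫_ℝ := by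
    have h1 : xs - X = -(X - xs) := by abel
    rw [h1, inner_neg_right]
    linear_combination (1 : ℝ) * real_inner_comm G (X - xs)
  have E6 : ⟪α • G + (-(γ*(1-γ))) • (Z - xs) + (-(γ*γ)) • (X - xs), eo⟫_ℝ
      = α*⟪G, eo⟫_ℝ - γ*(1-γ)*⟪Z - xs, eo⟫_ℝ - (γ*γ)*⟪X - xs, eo⟫_ℝ := by
    rw [inner_add_left, inner_add_left, real_inner_smul_left, real_inner_smul_left,
      real_inner_smul_left]
    ring
  have hnBx : ‖xs - X‖^2 = ‖X - xs‖^2 := by rw [norm_sub_rev]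
  -- inequalities
  have hWnn : (0:ℝ) ≤ ‖G‖^2 + 2*⟪G, eo⟫_ℝ + ‖eo‖^2 := by
    have h := norm_add_sq_real G eo
    have h2 := sq_nonneg ‖(G + eo : E)‖
    linarith
  have hABnn : (0:ℝ) ≤ ‖Z - xs‖^2 - 2*⟪Z - xs, X - xs⟫_ℝ + ‖X - xs‖^2 := by
    have h := norm_sub_sq_real (Z - xs) (X - xs)
    have h2 := sq_nonneg ‖((Z - xs) - (X - xs) : E)‖
    linarith
  have h1 : fY' ≤ fX - α/2*‖G‖^2 + α/2*‖eo‖^2 := by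
    have hb : L/2 * ‖Y' - X‖^2 ≤ α/2*(‖G‖^2 + 2*⟪G, eo⟫_ℝ + ‖eo‖^2) := by
      rw [E2]
      have hc : L/2*α^2 ≤ α/2 := by nlinarith
      calc L/2 * (α^2*(‖G‖^2 + 2*⟪G, eo⟫_ℝ + ‖eo‖^2))
          = (L/2*α^2) * (‖G‖^2 + 2*⟪G, eo⟫_ℝ + ‖eo‖^2) := by ring
        _ ≤ α/2 * (‖G‖^2 + 2*⟪G, eo⟫_ℝ + ‖eo‖^2) := mul_le_mul_of_nonneg_right hc hWnn
    rw [E3] at hup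
    linarith
  have h3' : (1-γ)*(-γ*⟪Z - xs, G⟫_ℝ + γ*⟪X - xs, G⟫_ℝ) ≤ (1-γ)*(fY - fX) := by
    apply mul_le_mul_of_nonneg_left _ (by linarith)
    rw [E4] at hlow1; linarith
  have h4' : γ*(-⟪X - xs, G⟫_ℝ) ≤ γ*(fs - fX - η/2*‖X - xs‖^2) := by
    apply mul_le_mul_of_nonneg_left _ (le_of_lt hγ0)
    rw [E5, hnBx] at hlow2; linarith
  have hηnn : (0:ℝ) ≤ η := by rw [hη]; positivity
  have hdrop : (0:ℝ) ≤ η/2*γ*(1-γ)*(‖Z - xs‖^2 - 2*⟪Z - xs, X - xs⟫_ℝ + ‖X - xs‖^2) := by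
    apply mul_nonneg _ hABnn
    have : (0:ℝ) ≤ 1 - γ := by linarith
    positivity
  rw [E6, E1]
  linarith [h1, h3', h4', hdrop]

end Stmt13Aux

open Stmt13Aux in
/-- **Proposition 5 (polynomial rate for variance-reduced accelerated SGD).** -/
theorem stmt_13
    {m : ℕ} {Ω : Type*} {m0 : MeasurableSpace Ω} {μ : Measure Ω}
    [IsProbabilityMeasure μ] (ℱ : Filtration ℕ m0)
    (f : EuclideanSpace ℝ (Fin m) → ℝ) (xstar : EuclideanSpace ℝ (Fin m))
    (x y w : ℕ → Ω → EuclideanSpace ℝ (Fin m)) (N : ℕ → ℕ)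
    (η L ν α β γ v : ℝ)
    (hη : 0 < η) (hηL : η ≤ L) (hν : 0 < ν) (hv : 0 < v)
    (hf : ContDiff ℝ 1 f)
    (hlip : ∀ a b, ‖gradient f a - gradient f b‖ ≤ L * ‖a - b‖)
    (hsc : ∀ a b, η * ‖a - b‖ ^ 2 ≤ (inner ℝ (gradient f a - gradient f b) (a - b) : ℝ))
    (hmin : ∀ z, f xstar ≤ f z)
    (hadaptedx : ∀ k, StronglyMeasurable[ℱ k] (x k))
    (hadaptedy : ∀ k, StronglyMeasurable[ℱ k] (y k))
    (hwint : ∀ k, Integrable (w k) μ)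
    (hwsqint : ∀ k, Integrable (fun ω => ‖w k ω‖ ^ 2) μ)
    (hw0 : ∀ k, μ[w k | ℱ k] =ᵐ[μ] 0)
    (hwvar : ∀ k, μ[fun ω => ‖w k ω‖ ^ 2 | ℱ k] ≤ᵐ[μ] fun _ => ν ^ 2 / N k)
    (hxint : ∀ k, Integrable (fun ω => ‖x k ω - xstar‖ ^ 2) μ)
    (hfyint : ∀ k, Integrable (fun ω => f (y k ω)) μ)
    (hα : 0 < α) (hα' : α ≤ 1 / L)
    (hγ : γ = Real.sqrt (α * η)) (hβ : β = (1 - γ) / (1 + γ))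
    (hN : ∀ k, N k = ⌈((k : ℝ) + 1) ^ v⌉₊)
    (hinit : x 0 = y 0)
    (hrec1 : ∀ k ω, y (k + 1) ω = x k ω - α • (gradient f (x k ω) + w k ω))
    (hrec2 : ∀ k ω, x (k + 1) ω = y (k + 1) ω + β • (y (k + 1) ω - y k ω)) :
    ∃ C : ℝ, 0 < C ∧ ∀ k, 1 ≤ k →
      (∫ ω, f (y k ω) ∂μ) - f xstar ≤ C * (k : ℝ) ^ (-v) := by
  classical
  -- basic scalar facts
  have hL : 0 < L := lt_of_lt_of_le hη hηL
  have hγ0 : 0 < γ := by rw [hγ]; exact Real.sqrt_pos.mpr (by positivity)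
  have hγ2 : γ ^ 2 = α * η := by rw [hγ]; exact Real.sq_sqrt (by positivity)
  have hγ1 : γ ≤ 1 := by
    have h1 : γ ^ 2 ≤ 1 := by
      rw [hγ2]
      calc α * η ≤ (1/L) * η := mul_le_mul_of_nonneg_right hα' hη.le
        _ ≤ 1 := by rw [div_mul_eq_mul_div, one_mul, div_le_one hL]; linarith
    nlinarith
  have hηe : η = γ ^ 2 / α := by rw [eq_div_iff hα.ne', hγ2]; ring
  have hαL2 : L * α ≤ 1 := by
    have := (le_div_iff₀ hL).mp hα'
    linarith
  -- gradient vanishes at the minimizer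
  have hgrad0 : gradient f xstar = 0 := by
    have hloc : IsLocalMin f xstar := Filter.Eventually.of_forall hmin
    have h0 : fderiv ℝ f xstar = 0 := hloc.fderiv_eq_zero
    rw [gradient, h0, map_zero]
  -- quadratic bounds
  have hup : ∀ a b : EuclideanSpace ℝ (Fin m), f b ≤ f a + ⟪gradient f a, b - a⟫_ℝ + L/2 * ‖b - a‖^2 :=
    upper_quad hf hlip
  have hlo : ∀ a b : EuclideanSpace ℝ (Fin m), f a + ⟪gradient f a, b - a⟫_ℝ + η/2 * ‖b - a‖^2 ≤ f b :=
    lower_quad hf hsc hη.le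
  have hy_lb : ∀ u : EuclideanSpace ℝ (Fin m), η/2 * ‖u - xstar‖^2 ≤ f u - f xstar := by
    intro u
    have h := hlo xstar u
    rw [hgrad0, inner_zero_left] at h
    linarith
  -- auxiliary sequences
  set z : ℕ → Ω → EuclideanSpace ℝ (Fin m) := fun k ω => ((1+γ)/γ) • x k ω - (1/γ) • y k ω with hzdef
  set V : ℕ → Ω → ℝ := fun k ω => f (y k ω) - f xstar + η/2 * ‖z k ω - xstar‖^2 with hVdef
  set H : ℕ → Ω → EuclideanSpace ℝ (Fin m) := fun k ω => α • gradient f (x k ω)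
      + (-(γ*(1-γ))) • (z k ω - xstar) + (-(γ*γ)) • (x k ω - xstar) with hHdef
  set a : ℕ → ℝ := fun k => ∫ ω, V k ω ∂μ with hadef
  -- measurability
  have hxm : ∀ k, StronglyMeasurable (x k) := fun k => (hadaptedx k).mono (ℱ.le k)
  have hym : ∀ k, StronglyMeasurable (y k) := fun k => (hadaptedy k).mono (ℱ.le k)
  have hzF : ∀ k, StronglyMeasurable[ℱ k] (z k) := fun k =>
    ((hadaptedx k).const_smul ((1+γ)/γ)).sub ((hadaptedy k).const_smul (1/γ))
  have hzm : ∀ k, StronglyMeasurable (z k) := fun k => (hzF k).mono (ℱ.le k)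
  have hHF : ∀ k, StronglyMeasurable[ℱ k] (H k) := by
    intro k
    have h1 : StronglyMeasurable[ℱ k] (fun ω => α • gradient f (x k ω)) :=
      ((grad_cont hf).comp_stronglyMeasurable (hadaptedx k)).const_smul α
    have h2 : StronglyMeasurable[ℱ k] (fun ω => (-(γ*(1-γ))) • (z k ω - xstar)) :=
      ((hzF k).sub stronglyMeasurable_const).const_smul (-(γ*(1-γ)))
    have h3 : StronglyMeasurable[ℱ k] (fun ω => (-(γ*γ)) • (x k ω - xstar)) :=
      ((hadaptedx k).sub stronglyMeasurable_const).const_smul (-(γ*γ))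
    exact (h1.add h2).add h3
  -- integrability of building blocks
  have hysq : ∀ k, Integrable (fun ω => ‖y k ω - xstar‖^2) μ := by
    intro k
    apply Integrable.mono' (((hfyint k).sub (integrable_const (f xstar))).const_mul (2/η))
    · exact (((continuous_id.sub continuous_const).norm.pow 2).comp_stronglyMeasurable
        (hym k)).aestronglyMeasurable
    · filter_upwards with ω
      have h := hy_lb (y k ω)
      rw [Real.norm_eq_abs, abs_of_nonneg (by positivity)]
      simp only [Pi.sub_apply]
      calc ‖y k ω - xstar‖^2 = 2/η * (η/2 * ‖y k ω - xstar‖^2) := by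
            field_simp
        _ ≤ 2/η * (f (y k ω) - f xstar) :=
            mul_le_mul_of_nonneg_left h (by positivity)
  have hzsq : ∀ k, Integrable (fun ω => ‖z k ω - xstar‖^2) μ := by
    intro k
    apply Integrable.mono'
      (((hxint k).const_mul (2*((1+γ)/γ)^2)).add ((hysq k).const_mul (2*(1/γ)^2)))
    · exact (((continuous_id.sub continuous_const).norm.pow 2).comp_stronglyMeasurable
        (hzm k)).aestronglyMeasurable
    · filter_upwards with ω
      have hzx : z k ω - xstar = ((1+γ)/γ) • (x k ω - xstar) - (1/γ) • (y k ω - xstar) := by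
        simp only [hzdef]
        match_scalars <;> (field_simp; try ring)
      have hb : ‖z k ω - xstar‖ ≤ ((1+γ)/γ) * ‖x k ω - xstar‖ + (1/γ) * ‖y k ω - xstar‖ := by
        rw [hzx]
        calc ‖((1+γ)/γ) • (x k ω - xstar) - (1/γ) • (y k ω - xstar)‖
            ≤ ‖((1+γ)/γ) • (x k ω - xstar)‖ + ‖(1/γ) • (y k ω - xstar)‖ := norm_sub_le _ _
          _ = ((1+γ)/γ) * ‖x k ω - xstar‖ + (1/γ) * ‖y k ω - xstar‖ := by
              rw [norm_smul, norm_smul, Real.norm_eq_abs, Real.norm_eq_abs,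
                abs_of_pos (by positivity), abs_of_pos (by positivity)]
      rw [Real.norm_eq_abs, abs_of_nonneg (by positivity)]
      simp only [Pi.add_apply]
      have h1 : (0:ℝ) ≤ ‖x k ω - xstar‖ := norm_nonneg _
      have h2 : (0:ℝ) ≤ ‖y k ω - xstar‖ := norm_nonneg _
      have h3 : (0:ℝ) ≤ ‖z k ω - xstar‖ := norm_nonneg _
      nlinarith [sq_nonneg (((1+γ)/γ) * ‖x k ω - xstar‖ - (1/γ) * ‖y k ω - xstar‖)]
  have hVint : ∀ k, Integrable (V k) μ := fun k =>
    (((hfyint k).sub (integrable_const (f xstar))).add ((hzsq k).const_mul (η/2)))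
  have hgnorm : ∀ (u : EuclideanSpace ℝ (Fin m)), ‖gradient f u‖ ≤ L * ‖u - xstar‖ := by
    intro u
    have := hlip u xstar
    rwa [hgrad0, sub_zero] at this
  have hgsq : ∀ k, Integrable (fun ω => ‖gradient f (x k ω)‖^2) μ := by
    intro k
    apply Integrable.mono' ((hxint k).const_mul (L^2))
    · exact (((grad_cont hf).norm.pow 2).comp_stronglyMeasurable (hxm k)).aestronglyMeasurable
    · filter_upwards with ω
      rw [Real.norm_eq_abs, abs_of_nonneg (by positivity)]
      have h := hgnorm (x k ω)
      nlinarith [norm_nonneg (gradient f (x k ω)), norm_nonneg (x k ω - xstar)]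
  have hHsq : ∀ k, Integrable (fun ω => ‖H k ω‖^2) μ := by
    intro k
    apply Integrable.mono' (((hgsq k).const_mul (3*α^2)).add
      (((hzsq k).const_mul (3*(γ*(1-γ))^2)).add ((hxint k).const_mul (3*(γ*γ)^2))))
    · exact ((continuous_norm.pow 2).comp_stronglyMeasurable
        ((hHF k).mono (ℱ.le k))).aestronglyMeasurable
    · filter_upwards with ω
      rw [Real.norm_eq_abs, abs_of_nonneg (by positivity)]
      simp only [Pi.add_apply]
      have hb : ‖H k ω‖ ≤ α * ‖gradient f (x k ω)‖ + |γ*(1-γ)| * ‖z k ω - xstar‖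
          + |γ*γ| * ‖x k ω - xstar‖ := by
        simp only [hHdef]
        calc ‖α • gradient f (x k ω) + (-(γ*(1-γ))) • (z k ω - xstar)
              + (-(γ*γ)) • (x k ω - xstar)‖
            ≤ ‖α • gradient f (x k ω) + (-(γ*(1-γ))) • (z k ω - xstar)‖
              + ‖(-(γ*γ)) • (x k ω - xstar)‖ := norm_add_le _ _
          _ ≤ ‖α • gradient f (x k ω)‖ + ‖(-(γ*(1-γ))) • (z k ω - xstar)‖
              + ‖(-(γ*γ)) • (x k ω - xstar)‖ := by
                have := norm_add_le (α • gradient f (x k ω))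
                  ((-(γ*(1-γ))) • (z k ω - xstar))
                linarith
          _ = α * ‖gradient f (x k ω)‖ + |γ*(1-γ)| * ‖z k ω - xstar‖
              + |γ*γ| * ‖x k ω - xstar‖ := by
                rw [norm_smul, norm_smul, norm_smul, Real.norm_eq_abs, Real.norm_eq_abs,
                  Real.norm_eq_abs, abs_of_pos hα, abs_neg, abs_neg]
      have h1 := norm_nonneg (gradient f (x k ω))
      have h2 := norm_nonneg (z k ω - xstar)
      have h3 := norm_nonneg (x k ω - xstar)
      have h4 := norm_nonneg (H k ω)
      have habs1 : |γ*(1-γ)|^2 = (γ*(1-γ))^2 := sq_abs _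
      have habs2 : |γ*γ|^2 = (γ*γ)^2 := sq_abs _
      nlinarith [sq_nonneg (α * ‖gradient f (x k ω)‖ - |γ*(1-γ)| * ‖z k ω - xstar‖),
        sq_nonneg (α * ‖gradient f (x k ω)‖ - |γ*γ| * ‖x k ω - xstar‖),
        sq_nonneg (|γ*(1-γ)| * ‖z k ω - xstar‖ - |γ*γ| * ‖x k ω - xstar‖),
        abs_nonneg (γ*(1-γ)), abs_nonneg (γ*γ)]
  have hHw_int : ∀ k, Integrable (fun ω => ⟪H k ω, w k ω⟫_ℝ) μ := by
    intro k
    apply Integrable.mono' (((hHsq k).add (hwsqint k)).const_mul (1/2))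
    · exact (((hHF k).mono (ℱ.le k)).aestronglyMeasurable.inner (hwint k).1)
    · filter_upwards with ω
      have h1 := abs_real_inner_le_norm (H k ω) (w k ω)
      rw [Real.norm_eq_abs]
      simp only [Pi.add_apply]
      nlinarith [sq_nonneg (‖H k ω‖ - ‖w k ω‖), abs_nonneg (⟪H k ω, w k ω⟫_ℝ)]
  -- nonnegativity
  have hVnn : ∀ k ω, 0 ≤ V k ω := by
    intro k ω
    simp only [hVdef]
    have h1 := hmin (y k ω)
    have h2 : 0 ≤ η/2 * ‖z k ω - xstar‖^2 := by positivity
    linarith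
  have hann : ∀ k, 0 ≤ a k := fun k => integral_nonneg (hVnn k)
  -- the one-step recursion
  have hstep : ∀ k, a (k+1) ≤ (1-γ) * a k + α * (ν^2 / N k) := by
    intro k
    have hpt : ∀ ω, V (k+1) ω ≤ (1-γ) * V k ω + α * ‖w k ω‖^2 + ⟪H k ω, w k ω⟫_ℝ := by
      intro ω
      have hZ' : z (k+1) ω = (1-γ) • z k ω + γ • x k ω
          - (α/γ) • (gradient f (x k ω) + w k ω) := by
        simp only [hzdef]
        rw [hrec2 k ω, hrec1 k ω, hβ]
        have h1γ : (1:ℝ) + γ ≠ 0 := by positivity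
        match_scalars <;> (field_simp; try ring)
      have hXY : x k ω - y k ω = γ • (z k ω - x k ω) := by
        simp only [hzdef]
        match_scalars <;> (field_simp; try ring)
      have hlow1 : f (x k ω) + ⟪gradient f (x k ω), y k ω - x k ω⟫_ℝ ≤ f (y k ω) := by
        have h := hlo (x k ω) (y k ω)
        nlinarith [sq_nonneg ‖y k ω - x k ω‖, hη.le]
      have := onestep (E := EuclideanSpace ℝ (Fin m)) hα hγ0 hγ1 hηe hαL2 (hrec1 k ω) hZ' hXY
        (hup (x k ω) (y (k+1) ω)) hlow1 (hlo (x k ω) xstar)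
      simp only [hVdef, hHdef]
      convert this using 2 <;> ring
    calc a (k+1) ≤ ∫ ω, ((1-γ) * V k ω + α * ‖w k ω‖^2 + ⟪H k ω, w k ω⟫_ℝ) ∂μ := by
          apply integral_mono (hVint (k+1))
            ((((hVint k).const_mul _).add ((hwsqint k).const_mul _)).add (hHw_int k))
          intro ω; exact hpt ω
      _ = (1-γ) * a k + α * (∫ ω, ‖w k ω‖^2 ∂μ) + ∫ ω, ⟪H k ω, w k ω⟫_ℝ ∂μ := by
          have hInt1 : Integrable (fun ω => (1-γ) * V k ω) μ := (hVint k).const_mul _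
          have hInt2 : Integrable (fun ω => α * ‖w k ω‖^2) μ := (hwsqint k).const_mul _
          have hInt12 : Integrable (fun ω => (1-γ) * V k ω + α * ‖w k ω‖^2) μ := hInt1.add hInt2
          rw [integral_add hInt12 (hHw_int k), integral_add hInt1 hInt2,
            integral_const_mul, integral_const_mul]
      _ = (1-γ) * a k + α * (∫ ω, ‖w k ω‖^2 ∂μ) := by
          rw [integral_inner_zero (ℱ.le k) (hHF k) (hHsq k) (hwsqint k) (hwint k) (hw0 k)]
          ring
      _ ≤ (1-γ) * a k + α * (ν^2 / N k) := by
          have := integral_sq_le (ℱ.le k) (hwsqint k) (hwvar k)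
          have h2 : α * (∫ ω, ‖w k ω‖^2 ∂μ) ≤ α * (ν^2 / N k) :=
            mul_le_mul_of_nonneg_left this hα.le
          linarith
  -- batch size bound
  have hNbd : ∀ k : ℕ, ν^2 / N k ≤ ν^2 * ((k:ℝ)+1) ^ (-v) := by
    intro k
    have hb : (0:ℝ) < ((k:ℝ)+1) ^ v := Real.rpow_pos_of_pos (by positivity) v
    have hNk : (((k:ℝ)+1)) ^ v ≤ (N k : ℝ) := by rw [hN k]; exact Nat.le_ceil _
    rw [Real.rpow_neg (by positivity), div_eq_mul_inv]
    exact mul_le_mul_of_nonneg_left (inv_anti₀ hb hNk) (by positivity)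
  obtain ⟨B, hB⟩ : ∃ B : ℝ, B = α * ν^2 := ⟨_, rfl⟩
  have hBpos : 0 < B := by rw [hB]; positivity
  have hrec : ∀ k, a (k+1) ≤ (1-γ) * a k + B * ((k:ℝ)+1) ^ (-v) := by
    intro k
    have h1 := hstep k
    have h2 : α * (ν^2 / N k) ≤ B * ((k:ℝ)+1) ^ (-v) := by
      rw [hB, mul_assoc]
      exact mul_le_mul_of_nonneg_left (hNbd k) hα.le
    linarith
  -- choose k₀ from the limit ((k+1)/(k+2))^v → 1
  have htends : Tendsto (fun k : ℕ => (((k:ℝ)+1)/((k:ℝ)+2)) ^ v) atTop (𝓝 1) := by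
    have hbase : Tendsto (fun k : ℕ => ((k:ℝ)+1)/((k:ℝ)+2)) atTop (𝓝 1) := by
      have h1 : ∀ k : ℕ, ((k:ℝ)+1)/((k:ℝ)+2) = 1 - 1/((k:ℝ)+2) := by
        intro k; field_simp; ring
      simp only [h1]
      have h2 : Tendsto (fun k : ℕ => 1/((k:ℝ)+2)) atTop (𝓝 0) := by
        simp only [one_div]
        have hb2 : Tendsto (fun k : ℕ => (k:ℝ)+2) atTop atTop :=
          Tendsto.atTop_add (tendsto_natCast_atTop_atTop (R := ℝ)) tendsto_const_nhds
        exact tendsto_inv_atTop_zero.comp hb2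
      have := tendsto_const_nhds (x := (1:ℝ)) (f := atTop (α := ℕ))
      simpa using this.sub h2
    have hc : ContinuousAt (fun u : ℝ => u ^ v) 1 :=
      (Real.continuousAt_rpow_const 1 v (Or.inl one_ne_zero))
    have := hc.tendsto.comp hbase
    simpa [Real.one_rpow, Function.comp_def] using this
  have hev : ∀ᶠ k : ℕ in atTop, 1 - γ/2 < (((k:ℝ)+1)/((k:ℝ)+2)) ^ v :=
    htends.eventually (eventually_gt_nhds (show (1:ℝ) - γ/2 < 1 by linarith))
  obtain ⟨k₀, hk₀⟩ := eventually_atTop.mp hev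
  -- the constant
  obtain ⟨D, hD⟩ : ∃ D : ℝ, D = (Finset.range (k₀+1)).sup'
      (Finset.nonempty_range_iff.mpr (Nat.succ_ne_zero k₀))
      (fun j => a j * ((j:ℝ)+1) ^ v) := ⟨_, rfl⟩
  obtain ⟨C, hC⟩ : ∃ C : ℝ, C = max D (2*B/γ) + 1 := ⟨_, rfl⟩
  have hDnn : 0 ≤ D := by
    rw [hD]
    refine le_trans ?_ (Finset.le_sup' (fun j : ℕ => a j * ((j:ℝ)+1) ^ v)
      (Finset.mem_range.mpr (Nat.succ_pos k₀)))
    have hx : (0:ℝ) ≤ a 0 * (((0:ℕ):ℝ)+1) ^ v :=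
      mul_nonneg (hann 0) (Real.rpow_nonneg (by norm_num) v)
    simpa using hx
  have hCpos : 0 < C := by
    have h0 : 0 ≤ max D (2*B/γ) := le_trans hDnn (le_max_left _ _)
    rw [hC]; linarith
  have hCB : 2*B/γ ≤ C := by
    rw [hC]; have := le_max_right D (2*B/γ); linarith
  have hCD : D ≤ C := by
    rw [hC]; have := le_max_left D (2*B/γ); linarith
  -- small indices
  have hsmall : ∀ j, j ≤ k₀ → a j ≤ C * ((j:ℝ)+1) ^ (-v) := by
    intro j hj
    have hp : (0:ℝ) < ((j:ℝ)+1) ^ v := Real.rpow_pos_of_pos (by positivity) v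
    have h1 : a j * ((j:ℝ)+1) ^ v ≤ D := by
      rw [hD]
      exact Finset.le_sup' (fun j : ℕ => a j * ((j:ℝ)+1) ^ v)
        (Finset.mem_range.mpr (Nat.lt_succ_of_le hj))
    rw [Real.rpow_neg (by positivity), ← div_eq_mul_inv, le_div_iff₀ hp]
    linarith
  -- induction
  have hclaim : ∀ k, a k ≤ C * ((k:ℝ)+1) ^ (-v) := by
    intro k
    induction k with
    | zero => exact hsmall 0 (Nat.zero_le _)
    | succ k ih =>
      rcases le_or_gt (k+1) k₀ with hk | hk
      · exact hsmall (k+1) hk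
      · have hkk₀ : k₀ ≤ k := Nat.lt_succ_iff.mp hk
        have ht := hk₀ k hkk₀
        have hp1 : (0:ℝ) < ((k:ℝ)+1) ^ v := Real.rpow_pos_of_pos (by positivity) v
        have hp2 : (0:ℝ) < ((k:ℝ)+2) ^ v := Real.rpow_pos_of_pos (by positivity) v
        have hp1' : (0:ℝ) < ((k:ℝ)+1) ^ (-v) := Real.rpow_pos_of_pos (by positivity) _
        have step1 : a (k+1) ≤ (1-γ) * (C * ((k:ℝ)+1) ^ (-v)) + B * ((k:ℝ)+1) ^ (-v) := by
          have h1 := hrec k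
          have h2 : (1-γ) * a k ≤ (1-γ) * (C * ((k:ℝ)+1) ^ (-v)) :=
            mul_le_mul_of_nonneg_left ih (by linarith)
          linarith
        have hBC : B ≤ γ/2 * C := by
          have h1 : 2*B/γ ≤ C := hCB
          rw [div_le_iff₀ hγ0] at h1
          linarith
        have step2 : (1-γ) * (C * ((k:ℝ)+1) ^ (-v)) + B * ((k:ℝ)+1) ^ (-v)
            ≤ (1 - γ/2) * C * ((k:ℝ)+1) ^ (-v) := by
          have : (1-γ) * C + B ≤ (1 - γ/2) * C := by linarith
          nlinarith [hp1'.le]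
        have step3 : (1 - γ/2) * C * ((k:ℝ)+1) ^ (-v) ≤ C * ((k:ℝ)+1+1) ^ (-v) := by
          have heq : (((k:ℝ)+1)/((k:ℝ)+2)) ^ v * ((k:ℝ)+1) ^ (-v) = ((k:ℝ)+2) ^ (-v) := by
            rw [Real.div_rpow (by positivity) (by positivity),
              Real.rpow_neg (by positivity : (0:ℝ) ≤ (k:ℝ)+1),
              Real.rpow_neg (by positivity : (0:ℝ) ≤ (k:ℝ)+2)]
            field_simp
          have h2 : (1 - γ/2) * ((k:ℝ)+1) ^ (-v) ≤ ((k:ℝ)+2) ^ (-v) := by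
            rw [← heq]
            exact mul_le_mul_of_nonneg_right ht.le hp1'.le
          have h3 : C * ((1 - γ/2) * ((k:ℝ)+1) ^ (-v)) ≤ C * ((k:ℝ)+2) ^ (-v) :=
            mul_le_mul_of_nonneg_left h2 hCpos.le
          have h4 : ((k:ℝ)+1+1) = ((k:ℝ)+2) := by ring
          rw [h4]
          linarith [h3]
        have h5 : ((k:ℝ)+1+1) = (((k+1):ℕ):ℝ)+1 := by push_cast; ring
        calc a (k+1) ≤ (1 - γ/2) * C * ((k:ℝ)+1) ^ (-v) := le_trans step1 step2
          _ ≤ C * ((k:ℝ)+1+1) ^ (-v) := step3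
          _ = C * ((((k+1):ℕ):ℝ)+1) ^ (-v) := by rw [h5]
  -- conclude
  refine ⟨C, hCpos, ?_⟩
  intro k hk
  have hk1 : (1:ℝ) ≤ (k:ℝ) := by exact_mod_cast hk
  have h1 : (∫ ω, f (y k ω) ∂μ) - f xstar ≤ a k := by
    have h2 : (∫ ω, f (y k ω) ∂μ) - f xstar = ∫ ω, (f (y k ω) - f xstar) ∂μ := by
      rw [integral_sub (hfyint k) (integrable_const _), integral_const]
      simp
    rw [h2]
    apply integral_mono ((hfyint k).sub (integrable_const _)) (hVint k)
    intro ω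
    simp only [hVdef, Pi.sub_apply]
    have : 0 ≤ η/2 * ‖z k ω - xstar‖^2 := by positivity
    linarith
  have h3 : a k ≤ C * ((k:ℝ)+1) ^ (-v) := hclaim k
  have h4 : ((k:ℝ)+1) ^ (-v) ≤ (k:ℝ) ^ (-v) := by
    have hkp : (0:ℝ) < (k:ℝ) := by linarith
    rw [Real.rpow_neg hkp.le, Real.rpow_neg (by positivity)]
    apply inv_anti₀ (Real.rpow_pos_of_pos hkp v)
    exact Real.rpow_le_rpow hkp.le (by linarith) hv.le
  have h5 : C * ((k:ℝ)+1) ^ (-v) ≤ C * (k:ℝ) ^ (-v) :=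
    mul_le_mul_of_nonneg_left h4 hCpos.le
  linarith
end

section
/- Let A be a real n×n matrix with operator norm ‖A‖ ≤ ϱ for some ϱ ∈ (0,1), let v > 0, define A₀ = A and A_k = ((k+1)/k)^{v/2} A for k ≥ 1, and define the products Φ_{k,j} = A_k A_{k−1} ⋯ A_j with the convention Φ_{j,j+1} = I. Then for any a > 0, sup_{k ≥ 1} Σ_{t=0}^{k} ‖Φ_{k,t+1}‖^a ≤ c_{ϱ^a, av/2} · (e^{av} ϱ^{−a} − 1)/(1 − ϱ^a) + 2/(a ϱ^a ln(1/ϱ)), where c_{q,w} = e^{−w} (w / ln(1/q))^w. -/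
open Filter Real Matrix
open scoped Topology

set_option maxHeartbeats 1000000
set_option synthInstance.maxHeartbeats 1000000

open Finset in
private lemma geom_bound (r : ℝ) (hr0 : 0 < r) (hr1 : r < 1) (n : ℕ) :
    ∑ t ∈ Finset.range n, r ^ t ≤ 1 / (1 - r) := by
  have h1r' : (0:ℝ) < 1 - r := by linarith
  rw [geom_sum_eq (ne_of_lt hr1)]
  have he : (r ^ n - 1) / (r - 1) = (1 - r ^ n) / (1 - r) := by
    rw [div_eq_div_iff (ne_of_lt (by linarith : r - 1 < (0:ℝ))) (ne_of_gt h1r')]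
    ring
  rw [he, div_le_div_iff₀ h1r' h1r']
  have hX : (0:ℝ) ≤ r ^ n := by positivity
  nlinarith

private lemma sqrt_tail_bound (q : ℝ) (hq0 : 0 < q) (hq1 : q < 1) :
    1 / (1 - q ^ ((2:ℝ)⁻¹)) ≤ 2 / (q * Real.log (1 / q)) := by
  set L : ℝ := Real.log (1 / q) with hLdef
  have hq1' : (1 : ℝ) < 1 / q := by rw [lt_div_iff₀ hq0]; linarith
  have hLpos : 0 < L := Real.log_pos hq1'
  have hlogq : Real.log q = -L := by rw [hLdef, one_div, Real.log_inv]; ring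
  obtain ⟨r, hrdef⟩ : ∃ r : ℝ, r = q ^ ((2 : ℝ)⁻¹) := ⟨_, rfl⟩
  have hr0 : 0 < r := hrdef ▸ Real.rpow_pos_of_pos hq0 _
  have hr1 : r < 1 := hrdef ▸ Real.rpow_lt_one hq0.le hq1 (by norm_num)
  have hqr : q ≤ r := by
    rw [hrdef]
    have := Real.rpow_le_rpow_of_exponent_ge hq0 hq1.le (by norm_num : (2:ℝ)⁻¹ ≤ 1)
    rwa [Real.rpow_one] at this
  rw [← hrdef]
  have hlr : L / 2 ≤ (1 - r) / r := by
    have h1 : Real.log (1 / r) ≤ 1 / r - 1 :=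
      Real.log_le_sub_one_of_pos (by positivity)
    have h2 : Real.log (1 / r) = L / 2 := by
      rw [one_div, Real.log_inv, hrdef, Real.log_rpow hq0, hlogq]; ring
    have h3 : 1 / r - 1 = (1 - r) / r := by field_simp
    rw [h2, h3] at h1; exact h1
  have h4 : q * L / 2 ≤ 1 - r := by
    have h5 := mul_le_mul_of_nonneg_left hlr hr0.le
    rw [mul_div_assoc', mul_div_cancel₀ _ (ne_of_gt hr0)] at h5
    nlinarith [mul_le_mul_of_nonneg_right hqr hLpos.le]
  have h5 : 0 < q * L / 2 := by positivity
  calc (1:ℝ) / (1 - r) ≤ 1 / (q * L / 2) := one_div_le_one_div_of_le h5 h4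
    _ = 2 / (q * L) := by field_simp

private lemma term2_bound (q w : ℝ) (hq0 : 0 < q) (hq1 : q < 1) (hw : 0 < w)
    (k t : ℕ) (htk : t ≤ k) (hnp : 2 * w ≤ ((t : ℝ) + 1) * Real.log (1 / q)) :
    q ^ ((k : ℝ) - t) * (((k : ℝ) + 1) / ((t : ℝ) + 1)) ^ w ≤ (q ^ ((2:ℝ)⁻¹)) ^ (k - t) := by
  set L : ℝ := Real.log (1 / q) with hLdef
  have hq1' : (1 : ℝ) < 1 / q := by rw [lt_div_iff₀ hq0]; linarith
  have hLpos : 0 < L := Real.log_pos hq1'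
  have hlogq : Real.log q = -L := by rw [hLdef, one_div, Real.log_inv]; ring
  have hs0 : (0 : ℝ) ≤ (k : ℝ) - t := by
    have := (Nat.cast_le (α := ℝ)).mpr htk; linarith
  have hm0 : (0 : ℝ) < (t : ℝ) + 1 := by positivity
  have hN0 : (0 : ℝ) < ((k : ℝ) + 1) / ((t : ℝ) + 1) := by positivity
  have hlog : Real.log (((k : ℝ) + 1) / ((t : ℝ) + 1)) ≤ ((k : ℝ) - t) / ((t : ℝ) + 1) := by
    have h := Real.log_le_sub_one_of_pos hN0
    have heq : ((k : ℝ) + 1) / ((t : ℝ) + 1) - 1 = ((k : ℝ) - t) / ((t : ℝ) + 1) := by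
      field_simp
      ring
    linarith [heq ▸ h]
  have hkey : w * Real.log (((k : ℝ) + 1) / ((t : ℝ) + 1)) ≤ ((k : ℝ) - t) / 2 * L := by
    have h1 : w * Real.log (((k : ℝ) + 1) / ((t : ℝ) + 1))
        ≤ w * (((k : ℝ) - t) / ((t : ℝ) + 1)) :=
      mul_le_mul_of_nonneg_left hlog hw.le
    have h2 : w * (((k : ℝ) - t) / ((t : ℝ) + 1)) ≤ ((k : ℝ) - t) / 2 * L := by
      rw [mul_div_assoc', div_le_iff₀ hm0]
      nlinarith [mul_nonneg hs0 (sub_nonneg.mpr hnp)]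
    linarith
  have hftle : q ^ ((k : ℝ) - t) * (((k : ℝ) + 1) / ((t : ℝ) + 1)) ^ w
      ≤ q ^ (((k : ℝ) - t) / 2) := by
    rw [Real.rpow_def_of_pos hq0, Real.rpow_def_of_pos hN0, ← Real.exp_add,
      Real.rpow_def_of_pos hq0, Real.exp_le_exp, hlogq]
    nlinarith [hkey]
  have hrpow : q ^ (((k : ℝ) - t) / 2) = (q ^ ((2:ℝ)⁻¹)) ^ (k - t) := by
    rw [← Real.rpow_natCast (q ^ ((2:ℝ)⁻¹)) (k - t), ← Real.rpow_mul hq0.le]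
    congr 1
    rw [Nat.cast_sub htk]
    ring
  rw [← hrpow]; exact hftle

private lemma key_sum (q w : ℝ) (hq0 : 0 < q) (hq1 : q < 1) (hw : 0 < w) (k : ℕ) :
    ∑ t ∈ Finset.range (k + 1), q ^ ((k : ℝ) - t) * (((k : ℝ) + 1) / ((t : ℝ) + 1)) ^ w ≤
      Real.exp (-w) * (w / Real.log (1 / q)) ^ w * (Real.exp (2 * w) / q - 1) / (1 - q)
        + 2 / (q * Real.log (1 / q)) := by
  set L : ℝ := Real.log (1 / q) with hLdef
  have hq1' : (1 : ℝ) < 1 / q := by rw [lt_div_iff₀ hq0]; linarith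
  have h1q : (0 : ℝ) < 1 - q := by linarith
  have hLpos : 0 < L := Real.log_pos hq1'
  have hlogq : Real.log q = -L := by rw [hLdef, one_div, Real.log_inv]; ring
  set C : ℝ := Real.exp (-w) * (w / L) ^ w with hCdef
  have hCpos : 0 < C := by positivity
  -- the maximum of x ↦ q^x x^w
  have hc : ∀ x : ℝ, 0 < x → q ^ x * x ^ w ≤ C := by
    intro x hx
    have hwL : (0 : ℝ) < w / L := by positivity
    rw [hCdef, Real.rpow_def_of_pos hq0, Real.rpow_def_of_pos hx, Real.rpow_def_of_pos hwL,
      ← Real.exp_add, ← Real.exp_add, Real.exp_le_exp, hlogq]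
    have h1 : Real.log (x * L / w) ≤ x * L / w - 1 :=
      Real.log_le_sub_one_of_pos (by positivity)
    have h2 : Real.log (x * L / w) = Real.log x + Real.log L - Real.log w := by
      rw [Real.log_div (by positivity) (ne_of_gt hw),
        Real.log_mul (ne_of_gt hx) (ne_of_gt hLpos)]
    have h3 : Real.log (w / L) = Real.log w - Real.log L :=
      Real.log_div (ne_of_gt hw) (ne_of_gt hLpos)
    have h4 : w * Real.log (x * L / w) ≤ w * (x * L / w - 1) :=
      mul_le_mul_of_nonneg_left h1 hw.le
    have h5 : w * (x * L / w - 1) = x * L - w := by field_simp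
    nlinarith [h4, h5, h2, h3]
  set f : ℕ → ℝ := fun t => q ^ ((k : ℝ) - t) * (((k : ℝ) + 1) / ((t : ℝ) + 1)) ^ w with hfdef
  set p : ℕ → Prop := fun t => ((t : ℝ) + 1) * L < 2 * w with hpdef
  have hsplit := Finset.sum_filter_add_sum_filter_not (Finset.range (k + 1)) p f
  -- Part 1 : small t
  have part1 : ∑ t ∈ (Finset.range (k + 1)).filter p, f t ≤
      C * ((Real.exp (2 * w) / q - 1) / (1 - q)) := by
    have hterm : ∀ t : ℕ, f t ≤ C * (q⁻¹ ^ (t + 1)) := by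
      intro t
      have h1 : (((k : ℝ) + 1) / ((t : ℝ) + 1)) ^ w ≤ ((k : ℝ) + 1) ^ w := by
        apply Real.rpow_le_rpow (by positivity) _ hw.le
        apply div_le_self (by positivity) (by linarith [Nat.cast_nonneg (α := ℝ) t])
      have h2 : f t ≤ q ^ ((k : ℝ) - t) * ((k : ℝ) + 1) ^ w :=
        mul_le_mul_of_nonneg_left h1 (by positivity)
      have h3 : q ^ ((k : ℝ) - t) = q ^ ((k : ℝ) + 1) * q ^ (-((t : ℝ) + 1)) := by
        rw [← Real.rpow_add hq0]; congr 1; ring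
      have h4 : q ^ (-((t : ℝ) + 1)) = q⁻¹ ^ (t + 1) := by
        rw [Real.rpow_neg hq0.le, inv_pow]
        congr 1
        rw [← Real.rpow_natCast q (t + 1)]
        congr 1
        push_cast; ring
      have h5 : q ^ ((k : ℝ) + 1) * ((k : ℝ) + 1) ^ w ≤ C := hc _ (by positivity)
      calc f t ≤ q ^ ((k : ℝ) - t) * ((k : ℝ) + 1) ^ w := h2
        _ = (q ^ ((k : ℝ) + 1) * ((k : ℝ) + 1) ^ w) * q⁻¹ ^ (t + 1) := by
            rw [h3, ← h4]; ring
        _ ≤ C * q⁻¹ ^ (t + 1) :=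
            mul_le_mul_of_nonneg_right h5 (by positivity)
    set M : ℕ := ⌈2 * w / L⌉₊ with hMdef
    have hsubset : (Finset.range (k + 1)).filter p ⊆ Finset.range M := by
      intro t ht
      rw [Finset.mem_range]
      have hpt : ((t : ℝ) + 1) * L < 2 * w := (Finset.mem_filter.mp ht).2
      have : (t : ℝ) < 2 * w / L := by
        rw [lt_div_iff₀ hLpos]; nlinarith
      exact Nat.lt_ceil.mpr this
    have hMb : (M : ℝ) * L ≤ 2 * w + L := by
      have : (M : ℝ) < 2 * w / L + 1 := Nat.ceil_lt_add_one (by positivity)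
      have h := mul_le_mul_of_nonneg_right this.le hLpos.le
      rw [add_mul, div_mul_cancel₀ _ (ne_of_gt hLpos)] at h
      linarith
    have hqinv1 : q⁻¹ ≠ 1 := by
      intro h; rw [inv_eq_one] at h; linarith
    have hgeom : ∑ t ∈ Finset.range M, q⁻¹ ^ (t + 1) ≤ (Real.exp (2 * w) / q - 1) / (1 - q) := by
      have hsum : ∑ t ∈ Finset.range M, q⁻¹ ^ (t + 1)
          = q⁻¹ * ((q⁻¹ ^ M - 1) / (q⁻¹ - 1)) := by
        have hps : ∀ t : ℕ, q⁻¹ ^ (t + 1) = q⁻¹ * q⁻¹ ^ t := fun t => by ring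
        rw [Finset.sum_congr rfl fun t _ => hps t, ← Finset.mul_sum, geom_sum_eq hqinv1]
      have hXle : q⁻¹ ^ M ≤ Real.exp (2 * w) / q := by
        have hqe : q⁻¹ = Real.exp L := by
          rw [hLdef, one_div, Real.exp_log (by positivity)]
        rw [hqe, ← Real.exp_nat_mul]
        rw [show Real.exp (2 * w) / q = Real.exp (2 * w) * q⁻¹ by ring, hqe, ← Real.exp_add]
        exact Real.exp_le_exp.mpr hMb
      have heq : q⁻¹ * ((q⁻¹ ^ M - 1) / (q⁻¹ - 1)) = (q⁻¹ ^ M - 1) / (1 - q) := by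
        have hd : q⁻¹ - 1 = (1 - q) / q := by field_simp
        rw [hd, div_div_eq_mul_div]
        field_simp
      rw [hsum, heq]
      gcongr
    calc ∑ t ∈ (Finset.range (k + 1)).filter p, f t
        ≤ ∑ t ∈ (Finset.range (k + 1)).filter p, C * q⁻¹ ^ (t + 1) :=
          Finset.sum_le_sum fun t _ => hterm t
      _ ≤ ∑ t ∈ Finset.range M, C * q⁻¹ ^ (t + 1) :=
          Finset.sum_le_sum_of_subset_of_nonneg hsubset (fun t _ _ => by positivity)
      _ = C * ∑ t ∈ Finset.range M, q⁻¹ ^ (t + 1) := by rw [Finset.mul_sum]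
      _ ≤ C * ((Real.exp (2 * w) / q - 1) / (1 - q)) :=
          mul_le_mul_of_nonneg_left hgeom hCpos.le
  -- Part 2 : large t
  obtain ⟨r, hrdef⟩ : ∃ r : ℝ, r = q ^ ((2 : ℝ)⁻¹) := ⟨_, rfl⟩
  have hr0 : 0 < r := hrdef ▸ Real.rpow_pos_of_pos hq0 _
  have hr1 : r < 1 := hrdef ▸ Real.rpow_lt_one hq0.le hq1 (by norm_num)
  have part2 : ∑ t ∈ (Finset.range (k + 1)).filter (fun t => ¬ p t), f t ≤ 2 / (q * L) := by
    have hterm : ∀ t ∈ (Finset.range (k + 1)).filter (fun t => ¬ p t),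
        f t ≤ r ^ (k - t) := by
      intro t ht
      rcases Finset.mem_filter.mp ht with ⟨htr, htp⟩
      have htk : t ≤ k := Nat.lt_succ_iff.mp (Finset.mem_range.mp htr)
      have hnp : 2 * w ≤ ((t : ℝ) + 1) * L := by
        simpa [hpdef] using not_lt.mp htp
      rw [hrdef]
      exact term2_bound q w hq0 hq1 hw k t htk hnp
    have e0 : ∑ t ∈ (Finset.range (k + 1)).filter (fun t => ¬ p t), f t
        ≤ ∑ t ∈ Finset.range (k + 1), r ^ (k - t) := by
      refine le_trans (Finset.sum_le_sum hterm) ?_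
      exact Finset.sum_le_sum_of_subset_of_nonneg (Finset.filter_subset _ _)
        (fun t _ _ => by positivity)
    have e1 : ∑ t ∈ Finset.range (k + 1), r ^ (k - t) = ∑ t ∈ Finset.range (k + 1), r ^ t := by
      rw [← Finset.sum_range_reflect (fun j => r ^ j) (k + 1)]
      exact Finset.sum_congr rfl fun t ht => by congr 1 <;> omega
    have e2 := geom_bound r hr0 hr1 (k + 1)
    have e3 : (1:ℝ) / (1 - r) ≤ 2 / (q * L) := by
      rw [hrdef, hLdef]
      exact sqrt_tail_bound q hq0 hq1
    calc ∑ t ∈ (Finset.range (k + 1)).filter (fun t => ¬ p t), f t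
        ≤ ∑ t ∈ Finset.range (k + 1), r ^ (k - t) := e0
      _ = ∑ t ∈ Finset.range (k + 1), r ^ t := e1
      _ ≤ 1 / (1 - r) := e2
      _ ≤ 2 / (q * L) := e3
  rw [← hsplit]
  have : C * (Real.exp (2 * w) / q - 1) / (1 - q) = C * ((Real.exp (2 * w) / q - 1) / (1 - q)) := by
    ring
  rw [this]
  exact add_le_add part1 part2

/-- **Lemma 6 (uniform bound on products of the time-varying matrices).**
`Φ k j = A_k ⋯ A_j` with `Φ j (j+1) = I`, where `A₀ = A` and
`A_k = ((k+1)/k)^{v/2} A` for `k ≥ 1`; the norm is the ℓ²-operator norm. -/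
theorem stmt_15
    {n : ℕ} (A : Matrix (Fin n) (Fin n) ℝ) (v ϱ : ℝ)
    (hv : 0 < v) (hϱ : ϱ ∈ Set.Ioo (0 : ℝ) 1)
    (hA : ‖Matrix.toEuclideanCLM (𝕜 := ℝ) A‖ ≤ ϱ)
    (Ak : ℕ → Matrix (Fin n) (Fin n) ℝ)
    (hA0 : Ak 0 = A)
    (hAk : ∀ k : ℕ, 1 ≤ k → Ak k = ((((k : ℝ) + 1) / k) ^ (v / 2)) • A)
    (Φ : ℕ → ℕ → Matrix (Fin n) (Fin n) ℝ)
    (hΦ1 : ∀ j, Φ j (j + 1) = 1)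
    (hΦ2 : ∀ k j, j ≤ k → Φ k j = Φ k (j + 1) * Ak j) :
    ∀ a : ℝ, 0 < a → ∀ k : ℕ, 1 ≤ k →
      ∑ t ∈ Finset.range (k + 1), ‖Matrix.toEuclideanCLM (𝕜 := ℝ) (Φ k (t + 1))‖ ^ a ≤
        Real.exp (-(a * v / 2)) * (a * v / 2 / Real.log (1 / ϱ ^ a)) ^ (a * v / 2)
            * (Real.exp (a * v) * ϱ ^ (-a) - 1) / (1 - ϱ ^ a)
          + 2 / (a * ϱ ^ a * Real.log (1 / ϱ)) := by
  intro a ha k hk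
  have hϱ0 : 0 < ϱ := hϱ.1
  have hϱ1 : ϱ < 1 := hϱ.2
  have hAknorm : ∀ t : ℕ, ‖Matrix.toEuclideanCLM (𝕜 := ℝ) (Ak (t + 1))‖ ≤
      ((((t : ℝ) + 2) / ((t : ℝ) + 1)) ^ (v / 2)) * ϱ := by
    intro t
    have h := hAk (t + 1) (by omega)
    rw [h, _root_.map_smul]
    have hcast : ((((t + 1 : ℕ) : ℝ) + 1) / ((t + 1 : ℕ) : ℝ)) = ((t : ℝ) + 2) / ((t : ℝ) + 1) := by
      push_cast; ring_nf
    rw [hcast]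
    have hnn : (0:ℝ) ≤ (((t : ℝ) + 2) / ((t : ℝ) + 1)) ^ (v / 2) := by positivity
    have hns := norm_smul ((((t : ℝ) + 2) / ((t : ℝ) + 1)) ^ (v / 2))
      (Matrix.toEuclideanCLM (𝕜 := ℝ) A)
    rw [hns, Real.norm_eq_abs, abs_of_nonneg hnn]
    exact mul_le_mul_of_nonneg_left hA hnn
  -- product bound, by induction on distance d = k - t
  have normΦ : ∀ k : ℕ, ∀ d t : ℕ, t + d = k →
      ‖Matrix.toEuclideanCLM (𝕜 := ℝ) (Φ k (t + 1))‖ ≤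
        ϱ ^ d * (((k : ℝ) + 1) / ((t : ℝ) + 1)) ^ (v / 2) := by
    intro k d
    induction d with
    | zero =>
      intro t ht
      have ht' : t = k := by omega
      subst ht'
      rw [hΦ1, _root_.map_one]
      have h1 : ‖(1 : EuclideanSpace ℝ (Fin n) →L[ℝ] EuclideanSpace ℝ (Fin n))‖ ≤ 1 := by
        rw [ContinuousLinearMap.one_def]
        exact ContinuousLinearMap.norm_id_le
      have h2 : ϱ ^ 0 * (((t : ℝ) + 1) / ((t : ℝ) + 1)) ^ (v / 2) = 1 := by
        rw [pow_zero, div_self (by positivity : ((t : ℝ) + 1) ≠ 0), Real.one_rpow, one_mul]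
      rw [h2]; exact h1
    | succ d ih =>
      intro t ht
      have htk : t + 1 ≤ k := by omega
      rw [hΦ2 k (t + 1) htk, _root_.map_mul]
      have hΦb := ih (t + 1) (by omega)
      have hcast2 : (((t + 1 : ℕ) : ℝ) + 1) = (t : ℝ) + 2 := by push_cast; ring
      rw [hcast2] at hΦb
      calc ‖Matrix.toEuclideanCLM (𝕜 := ℝ) (Φ k (t + 2)) *
              Matrix.toEuclideanCLM (𝕜 := ℝ) (Ak (t + 1))‖
          ≤ ‖Matrix.toEuclideanCLM (𝕜 := ℝ) (Φ k (t + 2))‖ *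
              ‖Matrix.toEuclideanCLM (𝕜 := ℝ) (Ak (t + 1))‖ := norm_mul_le _ _
        _ ≤ (ϱ ^ d * (((k : ℝ) + 1) / ((t : ℝ) + 2)) ^ (v / 2)) *
              (((((t : ℝ) + 2) / ((t : ℝ) + 1)) ^ (v / 2)) * ϱ) := by
            apply mul_le_mul hΦb (hAknorm t) (norm_nonneg _) (by positivity)
        _ = ϱ ^ (d + 1) * (((k : ℝ) + 1) / ((t : ℝ) + 1)) ^ (v / 2) := by
            have hPQ : (((k : ℝ) + 1) / ((t : ℝ) + 2)) ^ (v / 2) *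
                ((((t : ℝ) + 2) / ((t : ℝ) + 1)) ^ (v / 2)) =
                (((k : ℝ) + 1) / ((t : ℝ) + 1)) ^ (v / 2) := by
              rw [← Real.mul_rpow (by positivity) (by positivity)]
              congr 1
              field_simp
            rw [← hPQ]; ring
  -- now the scalar estimate
  have hq0 : 0 < ϱ ^ a := Real.rpow_pos_of_pos hϱ0 a
  have hq1 : ϱ ^ a < 1 := Real.rpow_lt_one hϱ0.le hϱ1 ha
  have hw : 0 < a * v / 2 := by positivity
  have hB : ∀ t ∈ Finset.range (k + 1),
      ‖Matrix.toEuclideanCLM (𝕜 := ℝ) (Φ k (t + 1))‖ ^ a ≤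
        (ϱ ^ a) ^ ((k : ℝ) - t) * (((k : ℝ) + 1) / ((t : ℝ) + 1)) ^ (a * v / 2) := by
    intro t ht
    have htk : t ≤ k := Nat.lt_succ_iff.mp (Finset.mem_range.mp ht)
    have h1 := normΦ k (k - t) t (by omega)
    have h2 : ‖Matrix.toEuclideanCLM (𝕜 := ℝ) (Φ k (t + 1))‖ ^ a ≤
        (ϱ ^ (k - t) * (((k : ℝ) + 1) / ((t : ℝ) + 1)) ^ (v / 2)) ^ a :=
      Real.rpow_le_rpow (norm_nonneg _) h1 ha.le
    rw [Real.mul_rpow (by positivity) (by positivity)] at h2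
    have h3 : ((ϱ ^ (k - t) : ℝ)) ^ a = (ϱ ^ a) ^ ((k : ℝ) - t) := by
      rw [← Real.rpow_natCast ϱ (k - t), ← Real.rpow_mul hϱ0.le, ← Real.rpow_mul hϱ0.le]
      congr 1
      rw [Nat.cast_sub htk]
      ring
    have h4 : ((((k : ℝ) + 1) / ((t : ℝ) + 1)) ^ (v / 2)) ^ a =
        (((k : ℝ) + 1) / ((t : ℝ) + 1)) ^ (a * v / 2) := by
      rw [← Real.rpow_mul (by positivity)]
      congr 1
      ring
    rw [h3, h4] at h2
    exact h2
  have H := key_sum (ϱ ^ a) (a * v / 2) hq0 hq1 hw k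
  have e3 : Real.log (1 / ϱ ^ a) = a * Real.log (1 / ϱ) := by
    rw [one_div, one_div, Real.log_inv, Real.log_inv, Real.log_rpow hϱ0]
    ring
  rw [show 2 * (a * v / 2) = a * v from by ring, e3] at H
  rw [e3, Real.rpow_neg hϱ0.le a]
  refine le_trans (Finset.sum_le_sum hB) (le_trans H (le_of_eq ?_))
  ring
end
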